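/- arXiv:1111.1450 — 6 statements merged into one kernel-verified Lean document; each statement's English description precedes it below -/
import Mathlib

section
/- Let M be a framed POVM on Ω with values in the positive bounded operators on a complex Hilbert space H, and let (S, H♯, V) and (S′, H♯′, V′) be two minimal Naimark representations of M. Then there exists a surjective isometry (unitary) T : H♯ → H♯′ such that V′ ∘ T = V and T⁻¹ S′(ω) T = S(ω) for every Borel set ω ⊆ Ω. -/
noncomputable section

open MeasureTheory ContinuousLinearMap

/-- A positive-operator-valued measure on a topological space `Ω`, with values in the
positive bounded operators on a complex Hilbert space `H`: for every `f : H` the map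
`ω ↦ ⟪f, M ω f⟫` is (the restriction to measurable sets of) a regular Borel measure. -/
def IsPOVM {Ω : Type*} [TopologicalSpace Ω] [MeasurableSpace Ω] [BorelSpace Ω]
    {H : Type*} [NormedAddCommGroup H] [InnerProductSpace ℂ H] [CompleteSpace H]
    (M : Set Ω → H →L[ℂ] H) : Prop :=
  (∀ ω : Set Ω, MeasurableSet ω → (M ω).IsPositive) ∧
    ∀ f : H, ∃ μ : Measure Ω, μ.Regular ∧
      ∀ ω : Set Ω, MeasurableSet ω → ((μ ω).toReal : ℂ) = inner ℂ f (M ω f)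

/-- A framed POVM with frame bounds `0 < A ≤ B < ∞`: `A·1 ≤ M(Ω) ≤ B·1`. -/
def IsFramedPOVM {Ω : Type*} [TopologicalSpace Ω] [MeasurableSpace Ω] [BorelSpace Ω]
    {H : Type*} [NormedAddCommGroup H] [InnerProductSpace ℂ H] [CompleteSpace H]
    (M : Set Ω → H →L[ℂ] H) (A B : ℝ) : Prop :=
  IsPOVM M ∧ 0 < A ∧ A ≤ B ∧
    (M Set.univ - (A : ℂ) • 1).IsPositive ∧ ((B : ℂ) • 1 - M Set.univ).IsPositive

/-- A spectral POVM: a POVM that is multiplicative on intersections. -/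
def IsSpectralPOVM {Ω : Type*} [TopologicalSpace Ω] [MeasurableSpace Ω] [BorelSpace Ω]
    {H : Type*} [NormedAddCommGroup H] [InnerProductSpace ℂ H] [CompleteSpace H]
    (S : Set Ω → H →L[ℂ] H) : Prop :=
  IsPOVM S ∧ ∀ ω₁ ω₂ : Set Ω, MeasurableSet ω₁ → MeasurableSet ω₂ →
    S (ω₁ ∩ ω₂) = S ω₁ * S ω₂

/-- A Naimark representation `(S, H♯, V)` of a POVM `M` on `H`: a spectral POVM `S` on the
auxiliary Hilbert space `H♯` with `S(Ω) = 1` and a bounded linear map `V : H♯ → H` with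
`M(ω) = V S(ω) V*` for all Borel `ω`. -/
def IsNaimarkRep {Ω : Type*} [TopologicalSpace Ω] [MeasurableSpace Ω] [BorelSpace Ω]
    {H : Type*} [NormedAddCommGroup H] [InnerProductSpace ℂ H] [CompleteSpace H]
    {H' : Type*} [NormedAddCommGroup H'] [InnerProductSpace ℂ H'] [CompleteSpace H']
    (M : Set Ω → H →L[ℂ] H) (S : Set Ω → H' →L[ℂ] H') (V : H' →L[ℂ] H) : Prop :=
  IsSpectralPOVM S ∧ S Set.univ = 1 ∧
    ∀ ω : Set Ω, MeasurableSet ω → M ω = V ∘L S ω ∘L adjoint V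

/-- A Naimark representation is minimal if `{S(ω) V* φ : φ ∈ H, ω Borel}` has dense linear
span in `H♯`. -/
def IsMinimalNaimarkRep {Ω : Type*} [TopologicalSpace Ω] [MeasurableSpace Ω] [BorelSpace Ω]
    {H : Type*} [NormedAddCommGroup H] [InnerProductSpace ℂ H] [CompleteSpace H]
    {H' : Type*} [NormedAddCommGroup H'] [InnerProductSpace ℂ H'] [CompleteSpace H']
    (M : Set Ω → H →L[ℂ] H) (S : Set Ω → H' →L[ℂ] H') (V : H' →L[ℂ] H) : Prop :=
  IsNaimarkRep M S V ∧
    Dense ((Submodule.span ℂ {x : H' | ∃ (φ : H) (ω : Set Ω),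
      MeasurableSet ω ∧ x = S ω (adjoint V φ)} : Submodule ℂ H') : Set H')



open ContinuousLinearMap

/-- Extension lemma: if two families have matching Gram matrices and the first spans a dense
subspace, there is a norm-preserving continuous linear map sending one family to the other. -/
lemma exists_clm_of_gram_eq {ι : Type*} {E F : Type*}
    [NormedAddCommGroup E] [InnerProductSpace ℂ E]
    [NormedAddCommGroup F] [InnerProductSpace ℂ F] [CompleteSpace F]
    (g : ι → E) (g' : ι → F)
    (hgg' : ∀ i j, (inner ℂ (g i) (g j) : ℂ) = inner ℂ (g' i) (g' j))
    (hd : Dense (Submodule.span ℂ (Set.range g) : Set E)) :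
    ∃ T : E →L[ℂ] F, (∀ x, ‖T x‖ = ‖x‖) ∧ ∀ i, T (g i) = g' i := by
  classical
  set L : (ι →₀ ℂ) →ₗ[ℂ] E := Finsupp.linearCombination ℂ g with hL
  set L' : (ι →₀ ℂ) →ₗ[ℂ] F := Finsupp.linearCombination ℂ g' with hL'
  have key : ∀ c d : ι →₀ ℂ, (inner ℂ (L c) (L d) : ℂ) = inner ℂ (L' c) (L' d) := by
    intro c d
    rw [hL, hL', Finsupp.linearCombination_apply, Finsupp.linearCombination_apply,
      Finsupp.linearCombination_apply, Finsupp.linearCombination_apply,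
      Finsupp.sum, Finsupp.sum, Finsupp.sum, Finsupp.sum, sum_inner, sum_inner]
    refine Finset.sum_congr rfl fun i _ => ?_
    rw [inner_sum, inner_sum]
    refine Finset.sum_congr rfl fun j _ => ?_
    rw [inner_smul_left, inner_smul_left, inner_smul_right, inner_smul_right, hgg']
  have hnorm : ∀ c : ι →₀ ℂ, ‖L c‖ = ‖L' c‖ := by
    intro c
    have h1 : ‖L c‖ ^ 2 = ‖L' c‖ ^ 2 := by
      calc ‖L c‖ ^ 2 = RCLike.re (inner ℂ (L c) (L c) : ℂ) := (inner_self_eq_norm_sq _).symm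
        _ = RCLike.re (inner ℂ (L' c) (L' c) : ℂ) := by rw [key]
        _ = ‖L' c‖ ^ 2 := inner_self_eq_norm_sq _
    calc ‖L c‖ = Real.sqrt (‖L c‖ ^ 2) := (Real.sqrt_sq (norm_nonneg _)).symm
      _ = Real.sqrt (‖L' c‖ ^ 2) := by rw [h1]
      _ = ‖L' c‖ := Real.sqrt_sq (norm_nonneg _)
  have hker : LinearMap.ker L ≤ LinearMap.ker L' := by
    intro c hc
    rw [LinearMap.mem_ker] at hc ⊢
    have := hnorm c
    rw [hc, norm_zero] at this
    exact norm_eq_zero.mp this.symm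
  set p : Submodule ℂ E := LinearMap.range L with hp
  set eqv := LinearMap.quotKerEquivRange L with heqv
  set f : p →ₗ[ℂ] F := ((LinearMap.ker L).liftQ L' hker).comp eqv.symm.toLinearMap with hfdef
  have hf : ∀ c : ι →₀ ℂ, f ⟨L c, LinearMap.mem_range_self L c⟩ = L' c := by
    intro c
    have h1 : eqv (Submodule.Quotient.mk c) = ⟨L c, LinearMap.mem_range_self L c⟩ :=
      Subtype.ext (LinearMap.quotKerEquivRange_apply_mk L c)
    rw [hfdef]
    simp only [LinearMap.comp_apply, LinearEquiv.coe_toLinearMap, ← h1,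
      LinearEquiv.symm_apply_apply, Submodule.liftQ_apply]
  have hfnorm : ∀ x : p, ‖f x‖ = ‖x‖ := by
    rintro ⟨x, hx⟩
    obtain ⟨c, rfl⟩ := hx
    rw [hf c]
    exact (hnorm c).symm
  set fi : p →ₗᵢ[ℂ] F := ⟨f, hfnorm⟩ with hfi
  set e : p →L[ℂ] E := p.subtypeL with he
  have h_e : IsUniformInducing (⇑e) := isometry_subtype_coe.isUniformInducing
  have hpd : Dense (p : Set E) := by
    rw [hp, Finsupp.range_linearCombination]
    exact hd
  have h_dense : DenseRange (⇑e) := by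
    rw [DenseRange, he]
    have : Set.range (⇑p.subtypeL) = (p : Set E) := Subtype.range_coe
    rw [this]
    exact hpd
  set T : E →L[ℂ] F := ContinuousLinearMap.extend fi.toContinuousLinearMap e with hT
  have hTp : ∀ x : p, T x = f x := by
    intro x
    have := ContinuousLinearMap.extend_eq fi.toContinuousLinearMap h_dense h_e x
    exact this
  refine ⟨T, ?_, ?_⟩
  · have hfun : (fun x : E => ‖T x‖) = fun x => ‖x‖ := by
      refine Continuous.ext_on hpd (T.continuous.norm) continuous_norm ?_
      intro x hx
      show ‖T x‖ = ‖x‖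
      have h5 := hTp ⟨x, hx⟩
      rw [show ((⟨x, hx⟩ : p) : E) = x from rfl] at h5
      rw [h5]
      exact hfnorm ⟨x, hx⟩
    exact fun x => congrFun hfun x
  · intro i
    have hLi : L (Finsupp.single i 1) = g i := by
      rw [hL]; simp
    have mem : g i ∈ p := hLi ▸ LinearMap.mem_range_self L _
    have h2 : T (g i) = f ⟨g i, mem⟩ := hTp ⟨g i, mem⟩
    have h3 : (⟨g i, mem⟩ : p) = ⟨L (Finsupp.single i 1), LinearMap.mem_range_self L _⟩ :=
      Subtype.ext hLi.symm
    rw [h2, h3, hf]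
    rw [hL']; simp

/-- Gram identity of a Naimark representation: inner products of generators only depend on `M`. -/
lemma naimark_inner {Ω : Type*} [TopologicalSpace Ω] [MeasurableSpace Ω] [BorelSpace Ω]
    {H : Type*} [NormedAddCommGroup H] [InnerProductSpace ℂ H] [CompleteSpace H]
    {K : Type*} [NormedAddCommGroup K] [InnerProductSpace ℂ K] [CompleteSpace K]
    (M : Set Ω → H →L[ℂ] H) (S : Set Ω → K →L[ℂ] K) (V : K →L[ℂ] H)
    (h : IsNaimarkRep M S V) (φ₁ φ₂ : H) (ω₁ ω₂ : Set Ω)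
    (h₁ : MeasurableSet ω₁) (h₂ : MeasurableSet ω₂) :
    (inner ℂ (S ω₁ (adjoint V φ₁)) (S ω₂ (adjoint V φ₂)) : ℂ) = inner ℂ φ₁ (M (ω₁ ∩ ω₂) φ₂) := by
  have hsa : adjoint (S ω₁) = S ω₁ := isSelfAdjoint_iff'.mp (h.1.1.1 ω₁ h₁).isSelfAdjoint
  have step1 : (inner ℂ (S ω₁ (adjoint V φ₁)) (S ω₂ (adjoint V φ₂)) : ℂ)
      = inner ℂ (adjoint V φ₁) (S ω₁ (S ω₂ (adjoint V φ₂))) := by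
    conv_lhs => rw [← hsa]
    exact adjoint_inner_left _ _ _
  rw [step1, ← ContinuousLinearMap.mul_apply, ← h.1.2 ω₁ ω₂ h₁ h₂,
    adjoint_inner_left, h.2.2 (ω₁ ∩ ω₂) (h₁.inter h₂)]
  rfl

/-- **Essential uniqueness of minimal Naimark representations.** If `(S, H♯, V)` and
`(S', H♯', V')` are two minimal Naimark representations of the same framed POVM `M`, then
there is a surjective isometry (unitary) `T : H♯ → H♯'` with `V' ∘ T = V` and
`T⁻¹ S'(ω) T = S(ω)` for every Borel `ω`. -/
theorem minimal_naimark_rep_unique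
    {Ω : Type*} [TopologicalSpace Ω] [MeasurableSpace Ω] [BorelSpace Ω]
    {H : Type*} [NormedAddCommGroup H] [InnerProductSpace ℂ H] [CompleteSpace H]
    {H₁ : Type*} [NormedAddCommGroup H₁] [InnerProductSpace ℂ H₁] [CompleteSpace H₁]
    {H₂ : Type*} [NormedAddCommGroup H₂] [InnerProductSpace ℂ H₂] [CompleteSpace H₂]
    (M : Set Ω → H →L[ℂ] H) (A B : ℝ) (hM : IsFramedPOVM M A B)
    (S : Set Ω → H₁ →L[ℂ] H₁) (V : H₁ →L[ℂ] H)
    (S' : Set Ω → H₂ →L[ℂ] H₂) (V' : H₂ →L[ℂ] H)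
    (hSV : IsMinimalNaimarkRep M S V) (hSV' : IsMinimalNaimarkRep M S' V') :
    ∃ T : H₁ ≃ₗᵢ[ℂ] H₂,
      (∀ x : H₁, V' (T x) = V x) ∧
      ∀ ω : Set Ω, MeasurableSet ω → ∀ x : H₁, T.symm (S' ω (T x)) = S ω x := by
  classical
  obtain ⟨hN, hdense⟩ := hSV
  obtain ⟨hN', hdense'⟩ := hSV'
  set g : H × {ω : Set Ω // MeasurableSet ω} → H₁ :=
    fun i => S i.2.1 (adjoint V i.1) with hg
  set g' : H × {ω : Set Ω // MeasurableSet ω} → H₂ :=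
    fun i => S' i.2.1 (adjoint V' i.1) with hg'
  have hset : {x : H₁ | ∃ (φ : H) (ω : Set Ω), MeasurableSet ω ∧ x = S ω (adjoint V φ)}
      = Set.range g := by
    ext x
    constructor
    · rintro ⟨φ, ω, hω, rfl⟩; exact ⟨(φ, ⟨ω, hω⟩), rfl⟩
    · rintro ⟨⟨φ, ω, hω⟩, rfl⟩; exact ⟨φ, ω, hω, rfl⟩
  have hset' : {x : H₂ | ∃ (φ : H) (ω : Set Ω), MeasurableSet ω ∧ x = S' ω (adjoint V' φ)}
      = Set.range g' := by
    ext x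
    constructor
    · rintro ⟨φ, ω, hω, rfl⟩; exact ⟨(φ, ⟨ω, hω⟩), rfl⟩
    · rintro ⟨⟨φ, ω, hω⟩, rfl⟩; exact ⟨φ, ω, hω, rfl⟩
  have hd : Dense (Submodule.span ℂ (Set.range g) : Set H₁) := by rw [← hset]; exact hdense
  have hd' : Dense (Submodule.span ℂ (Set.range g') : Set H₂) := by rw [← hset']; exact hdense'
  have hgg' : ∀ i j, (inner ℂ (g i) (g j) : ℂ) = inner ℂ (g' i) (g' j) := by
    rintro ⟨φ₁, ω₁, h₁⟩ ⟨φ₂, ω₂, h₂⟩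
    show (inner ℂ (S ω₁ (adjoint V φ₁)) (S ω₂ (adjoint V φ₂)) : ℂ)
      = inner ℂ (S' ω₁ (adjoint V' φ₁)) (S' ω₂ (adjoint V' φ₂))
    rw [naimark_inner M S V hN φ₁ φ₂ ω₁ ω₂ h₁ h₂,
      naimark_inner M S' V' hN' φ₁ φ₂ ω₁ ω₂ h₁ h₂]
  obtain ⟨T₀, hTnorm, hTg⟩ := exists_clm_of_gram_eq g g' hgg' hd
  have hiso : Isometry ⇑T₀ := AddMonoidHomClass.isometry_of_norm T₀ hTnorm
  have hclosed : IsClosed (Set.range ⇑T₀) := hiso.isClosedEmbedding.isClosed_range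
  have hrange : Submodule.span ℂ (Set.range g') ≤ LinearMap.range (T₀ : H₁ →ₗ[ℂ] H₂) := by
    rw [Submodule.span_le]
    rintro _ ⟨i, rfl⟩
    exact ⟨g i, hTg i⟩
  have hdr : Dense (Set.range ⇑T₀) := by
    refine hd'.mono ?_
    intro x hx
    obtain ⟨y, hy⟩ := hrange hx
    exact ⟨y, hy⟩
  have hsurj0 : Set.range ⇑T₀ = Set.univ := by
    rw [← hclosed.closure_eq]
    exact hdr.closure_eq
  set TL : H₁ →ₗᵢ[ℂ] H₂ := ⟨↑T₀, hTnorm⟩ with hTL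
  have hsurj : Function.Surjective ⇑TL := by
    intro y
    have : y ∈ Set.range ⇑T₀ := by rw [hsurj0]; exact Set.mem_univ y
    obtain ⟨x, hx⟩ := this
    exact ⟨x, hx⟩
  set T := LinearIsometryEquiv.ofSurjective TL hsurj with hTdef
  have hTx : ∀ x, T x = T₀ x := by
    intro x
    rw [hTdef]
    exact congrFun (LinearIsometryEquiv.coe_ofSurjective TL hsurj) x
  have hV : V' ∘L T₀ = V := by
    refine ContinuousLinearMap.ext_on hd ?_
    rintro _ ⟨⟨φ, ω, hω⟩, rfl⟩
    show V' (T₀ (g (φ, ⟨ω, hω⟩))) = V (g (φ, ⟨ω, hω⟩))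
    rw [hTg]
    have e1 : V' (g' (φ, ⟨ω, hω⟩)) = M ω φ := by rw [hN'.2.2 ω hω]; rfl
    have e2 : V (g (φ, ⟨ω, hω⟩)) = M ω φ := by rw [hN.2.2 ω hω]; rfl
    rw [e1, e2]
  have hcomm : ∀ ω : Set Ω, MeasurableSet ω → S' ω ∘L T₀ = T₀ ∘L S ω := by
    intro ω hω
    refine ContinuousLinearMap.ext_on hd ?_
    rintro _ ⟨⟨φ, ω', hω'⟩, rfl⟩
    show S' ω (T₀ (g (φ, ⟨ω', hω'⟩))) = T₀ (S ω (g (φ, ⟨ω', hω'⟩)))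
    rw [hTg]
    have e1 : S' ω (g' (φ, ⟨ω', hω'⟩)) = g' (φ, ⟨ω ∩ ω', hω.inter hω'⟩) := by
      show S' ω (S' ω' (adjoint V' φ)) = S' (ω ∩ ω') (adjoint V' φ)
      rw [hN'.1.2 ω ω' hω hω']; rfl
    have e2 : S ω (g (φ, ⟨ω', hω'⟩)) = g (φ, ⟨ω ∩ ω', hω.inter hω'⟩) := by
      show S ω (S ω' (adjoint V φ)) = S (ω ∩ ω') (adjoint V φ)
      rw [hN.1.2 ω ω' hω hω']; rfl
    rw [e1, e2, hTg]
  refine ⟨T, ?_, ?_⟩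
  · intro x
    rw [hTx x, ← ContinuousLinearMap.comp_apply, hV]
  · intro ω hω x
    have h6 : (S' ω ∘L T₀) x = (T₀ ∘L S ω) x := by rw [hcomm ω hω]
    simp only [ContinuousLinearMap.comp_apply] at h6
    have h7 : S' ω (T x) = T (S ω x) := by rw [hTx x, hTx (S ω x), h6]
    rw [h7, LinearIsometryEquiv.symm_apply_apply]
end
end

section
/- Suppose M₁ : B(Ω) → P(H₁) and M₂ : B(Ω) → P(H₂) are POVMs that are isomorphic via a unitary transformation U : H₁ → H₂, i.e., U M₁(ω) U⁻¹ = M₂(ω) for all Borel ω ⊆ Ω. Let (S₁, H₁♯, V₁) and (S₂, H₂♯, V₂) be minimal Naimark representations of M₁ and M₂ respectively. Then there exists a unitary transformation U♯ : H₁♯ → H₂♯ such that U♯ S₁(ω) (U♯)⁻¹ = S₂(ω) for all Borel ω, and the diagram commutes: U ∘ V₁ = V₂ ∘ U♯. -/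
noncomputable section

open MeasureTheory ContinuousLinearMap

set_option maxHeartbeats 2000000 in
/-- **Naimark representations of isomorphic POVMs.** If POVMs `M₁` on `H₁` and `M₂` on `H₂`
are isomorphic via a unitary `U : H₁ → H₂` (i.e. `U M₁(ω) U⁻¹ = M₂(ω)` for all Borel `ω`),
and `(Sᵢ, Hᵢ♯, Vᵢ)` are minimal Naimark representations of `Mᵢ`, then there is a unitary
`U♯ : H₁♯ → H₂♯` with `U♯ S₁(ω) (U♯)⁻¹ = S₂(ω)` for all Borel `ω` and `U ∘ V₁ = V₂ ∘ U♯`. -/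
theorem naimark_rep_of_isomorphic_povms
    {Ω : Type*} [TopologicalSpace Ω] [MeasurableSpace Ω] [BorelSpace Ω]
    {H₁ : Type*} [NormedAddCommGroup H₁] [InnerProductSpace ℂ H₁] [CompleteSpace H₁]
    {H₂ : Type*} [NormedAddCommGroup H₂] [InnerProductSpace ℂ H₂] [CompleteSpace H₂]
    {K₁ : Type*} [NormedAddCommGroup K₁] [InnerProductSpace ℂ K₁] [CompleteSpace K₁]
    {K₂ : Type*} [NormedAddCommGroup K₂] [InnerProductSpace ℂ K₂] [CompleteSpace K₂]
    (M₁ : Set Ω → H₁ →L[ℂ] H₁) (M₂ : Set Ω → H₂ →L[ℂ] H₂)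
    (hM₁ : IsPOVM M₁) (hM₂ : IsPOVM M₂)
    (U : H₁ ≃ₗᵢ[ℂ] H₂)
    (hU : ∀ ω : Set Ω, MeasurableSet ω → ∀ x : H₂, U (M₁ ω (U.symm x)) = M₂ ω x)
    (S₁ : Set Ω → K₁ →L[ℂ] K₁) (V₁ : K₁ →L[ℂ] H₁)
    (S₂ : Set Ω → K₂ →L[ℂ] K₂) (V₂ : K₂ →L[ℂ] H₂)
    (h₁ : IsMinimalNaimarkRep M₁ S₁ V₁) (h₂ : IsMinimalNaimarkRep M₂ S₂ V₂) :
    ∃ Usharp : K₁ ≃ₗᵢ[ℂ] K₂,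
      (∀ ω : Set Ω, MeasurableSet ω → ∀ y : K₂, Usharp (S₁ ω (Usharp.symm y)) = S₂ ω y) ∧
      ∀ x : K₁, U (V₁ x) = V₂ (Usharp x) := by
  
  classical
  obtain ⟨⟨⟨⟨hS₁pos, -⟩, hS₁mul⟩, hS₁univ, hN₁⟩, hdense₁⟩ := h₁
  obtain ⟨⟨⟨⟨hS₂pos, -⟩, hS₂mul⟩, hS₂univ, hN₂⟩, hdense₂⟩ := h₂
  set ι := H₁ × {ω : Set Ω // MeasurableSet ω} with hι
  set g₁ : ι → K₁ := fun p => S₁ p.2.1 (adjoint V₁ p.1) with hg₁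
  set g₂ : ι → K₂ := fun p => S₂ p.2.1 (adjoint V₂ (U p.1)) with hg₂
  -- the generator set descriptions
  have hset₁ : {x : K₁ | ∃ (φ : H₁) (ω : Set Ω), MeasurableSet ω ∧ x = S₁ ω (adjoint V₁ φ)}
      = Set.range g₁ := by
    ext x
    constructor
    · rintro ⟨φ, ω, hω, rfl⟩; exact ⟨(φ, ⟨ω, hω⟩), rfl⟩
    · rintro ⟨⟨φ, ω, hω⟩, rfl⟩; exact ⟨φ, ω, hω, rfl⟩
  have hset₂ : {x : K₂ | ∃ (φ : H₂) (ω : Set Ω), MeasurableSet ω ∧ x = S₂ ω (adjoint V₂ φ)}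
      = Set.range g₂ := by
    ext x
    constructor
    · rintro ⟨φ, ω, hω, rfl⟩
      exact ⟨(U.symm φ, ⟨ω, hω⟩), by simp [hg₂, U.apply_symm_apply]⟩
    · rintro ⟨⟨φ, ω, hω⟩, rfl⟩; exact ⟨U φ, ω, hω, rfl⟩
  have hspan₁ : Dense ((Submodule.span ℂ (Set.range g₁) : Submodule ℂ K₁) : Set K₁) := by
    rw [← hset₁]; exact hdense₁
  have hspan₂ : Dense ((Submodule.span ℂ (Set.range g₂) : Submodule ℂ K₂) : Set K₂) := by
    rw [← hset₂]; exact hdense₂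
  -- key inner-product identity on generators
  have hkey : ∀ i j : ι, (inner ℂ (g₁ i) (g₁ j) : ℂ) = inner ℂ (g₂ i) (g₂ j) := by
    rintro ⟨φ, ω, hω⟩ ⟨ψ, ω', hω'⟩
    have hsa₁ : adjoint (S₁ ω) = S₁ ω := (hS₁pos ω hω).isSelfAdjoint.adjoint_eq
    have hsa₂ : adjoint (S₂ ω) = S₂ ω := (hS₂pos ω hω).isSelfAdjoint.adjoint_eq
    have e₁ : (inner ℂ (g₁ (φ, ⟨ω, hω⟩)) (g₁ (ψ, ⟨ω', hω'⟩)) : ℂ)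
        = inner ℂ φ (M₁ (ω ∩ ω') ψ) := by
      calc (inner ℂ (S₁ ω (adjoint V₁ φ)) (S₁ ω' (adjoint V₁ ψ)) : ℂ)
          = inner ℂ (adjoint (S₁ ω) (adjoint V₁ φ)) (S₁ ω' (adjoint V₁ ψ)) := by rw [hsa₁]
        _ = inner ℂ (adjoint V₁ φ) (S₁ ω (S₁ ω' (adjoint V₁ ψ))) := adjoint_inner_left _ _ _
        _ = inner ℂ (adjoint V₁ φ) ((S₁ ω * S₁ ω') (adjoint V₁ ψ)) := rfl
        _ = inner ℂ (adjoint V₁ φ) (S₁ (ω ∩ ω') (adjoint V₁ ψ)) := by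
              rw [← hS₁mul ω ω' hω hω']
        _ = inner ℂ φ (V₁ (S₁ (ω ∩ ω') (adjoint V₁ ψ))) := adjoint_inner_left _ _ _
        _ = inner ℂ φ (M₁ (ω ∩ ω') ψ) := by rw [hN₁ (ω ∩ ω') (hω.inter hω')]; rfl
    have e₂ : (inner ℂ (g₂ (φ, ⟨ω, hω⟩)) (g₂ (ψ, ⟨ω', hω'⟩)) : ℂ)
        = inner ℂ (U φ) (M₂ (ω ∩ ω') (U ψ)) := by
      calc (inner ℂ (S₂ ω (adjoint V₂ (U φ))) (S₂ ω' (adjoint V₂ (U ψ))) : ℂ)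
          = inner ℂ (adjoint (S₂ ω) (adjoint V₂ (U φ))) (S₂ ω' (adjoint V₂ (U ψ))) := by rw [hsa₂]
        _ = inner ℂ (adjoint V₂ (U φ)) (S₂ ω (S₂ ω' (adjoint V₂ (U ψ)))) := adjoint_inner_left _ _ _
        _ = inner ℂ (adjoint V₂ (U φ)) ((S₂ ω * S₂ ω') (adjoint V₂ (U ψ))) := rfl
        _ = inner ℂ (adjoint V₂ (U φ)) (S₂ (ω ∩ ω') (adjoint V₂ (U ψ))) := by
              rw [← hS₂mul ω ω' hω hω']
        _ = inner ℂ (U φ) (V₂ (S₂ (ω ∩ ω') (adjoint V₂ (U ψ)))) := adjoint_inner_left _ _ _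
        _ = inner ℂ (U φ) (M₂ (ω ∩ ω') (U ψ)) := by rw [hN₂ (ω ∩ ω') (hω.inter hω')]; rfl
    rw [e₁, e₂, ← hU (ω ∩ ω') (hω.inter hω') (U ψ), U.symm_apply_apply,
      U.inner_map_map]
  set T₀ : (ι →₀ ℂ) →ₗ[ℂ] K₁ := Finsupp.linearCombination ℂ g₁ with hT₀
  set Tt : (ι →₀ ℂ) →ₗ[ℂ] K₂ := Finsupp.linearCombination ℂ g₂ with hTt
  have hpair : ∀ (i : ι) (d : ι →₀ ℂ), (inner ℂ (g₁ i) (T₀ d) : ℂ) = inner ℂ (g₂ i) (Tt d) := by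
    intro i d
    induction d using Finsupp.induction with
    | zero => simp
    | single_add a b f haf hb ih =>
      simp only [map_add, inner_add_right, ih, hT₀, hTt,
        Finsupp.linearCombination_single, inner_smul_right, hkey i a]
      rw [← hT₀, ← hTt, ih]
  have hinner : ∀ c d : ι →₀ ℂ, (inner ℂ (T₀ c) (T₀ d) : ℂ) = inner ℂ (Tt c) (Tt d) := by
    intro c d
    induction c using Finsupp.induction with
    | zero => simp
    | single_add a b f haf hb ih =>
      simp only [map_add, inner_add_left, ih, hT₀, hTt,
        Finsupp.linearCombination_single, inner_smul_left, hpair a d]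
      rw [← hT₀, ← hTt, ih, hpair a d]
  have hnorm0 : ∀ c : ι →₀ ℂ, ‖T₀ c‖ = ‖Tt c‖ := by
    intro c
    rw [@norm_eq_sqrt_re_inner ℂ, @norm_eq_sqrt_re_inner ℂ, hinner]
  have hker : LinearMap.ker T₀ ≤ LinearMap.ker Tt := by
    intro c hc
    rw [LinearMap.mem_ker] at hc ⊢
    have := hnorm0 c
    rw [hc, norm_zero] at this
    exact norm_eq_zero.mp this.symm
  set T : LinearMap.range T₀ →ₗ[ℂ] K₂ :=
    (Submodule.liftQ (LinearMap.ker T₀) Tt hker).comp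
      (T₀.quotKerEquivRange.symm : LinearMap.range T₀ →ₗ[ℂ] _) with hTdef
  have hT : ∀ (c : ι →₀ ℂ) (h : T₀ c ∈ LinearMap.range T₀), T ⟨T₀ c, h⟩ = Tt c := by
    intro c h
    simp only [hTdef, LinearMap.comp_apply, LinearEquiv.coe_coe,
      LinearMap.quotKerEquivRange_symm_apply_image, Submodule.mkQ_apply,
      Submodule.liftQ_apply]
  have hTnorm : ∀ x : LinearMap.range T₀, ‖T x‖ = ‖x‖ := by
    rintro ⟨x, hx⟩
    obtain ⟨c, rfl⟩ := hx
    rw [hT c ⟨c, rfl⟩]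
    exact (hnorm0 c).symm
  set Tc : LinearMap.range T₀ →L[ℂ] K₂ :=
    T.mkContinuous 1 (fun x => by rw [hTnorm x, one_mul]) with hTc
  have hD₁dense : Dense ((LinearMap.range T₀ : Submodule ℂ K₁) : Set K₁) := by
    rw [hT₀, Finsupp.range_linearCombination]; exact hspan₁
  have h_dense_e₁ : DenseRange ((LinearMap.range T₀).subtypeL) := hD₁dense.denseRange_val
  have h_e₁ : IsUniformInducing ((LinearMap.range T₀).subtypeL) :=
    isometry_subtype_coe.isUniformInducing
  set W : K₁ →L[ℂ] K₂ := Tc.extend (LinearMap.range T₀).subtypeL with hW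
  have hWe : ∀ x : LinearMap.range T₀, W x = Tc x := fun x =>
    ContinuousLinearMap.extend_eq Tc h_dense_e₁ h_e₁ x
  have hWg : ∀ i : ι, W (g₁ i) = g₂ i := by
    intro i
    have h1 : T₀ (Finsupp.single i 1) = g₁ i := by
      simp [hT₀, Finsupp.linearCombination_single]
    have hmem : g₁ i ∈ LinearMap.range T₀ := ⟨Finsupp.single i 1, h1⟩
    have := hWe ⟨g₁ i, hmem⟩
    rw [this]
    show T ⟨g₁ i, hmem⟩ = g₂ i
    have : T ⟨g₁ i, hmem⟩ = Tt (Finsupp.single i 1) := by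
      have hmem' : T₀ (Finsupp.single i 1) ∈ LinearMap.range T₀ := ⟨_, rfl⟩
      have hxeq : (⟨g₁ i, hmem⟩ : LinearMap.range T₀) = ⟨T₀ (Finsupp.single i 1), hmem'⟩ :=
        Subtype.ext h1.symm
      rw [hxeq, hT]
    rw [this]
    simp [hTt, Finsupp.linearCombination_single]
  have hWnorm : ∀ x : K₁, ‖W x‖ = ‖x‖ := by
    have hfun : (fun x : K₁ => ‖W x‖) = fun x : K₁ => ‖x‖ := by
      refine Continuous.ext_on hD₁dense W.continuous.norm continuous_norm ?_
      rintro x hx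
      show ‖W x‖ = ‖x‖
      have := hWe ⟨x, hx⟩
      rw [show W x = Tc ⟨x, hx⟩ from this]
      rw [show ‖Tc ⟨x, hx⟩‖ = ‖(⟨x, hx⟩ : LinearMap.range T₀)‖ from hTnorm _]
      rfl
    exact fun x => congrFun hfun x
  set Wli : K₁ →ₗᵢ[ℂ] K₂ := ⟨(W : K₁ →ₗ[ℂ] K₂), hWnorm⟩ with hWli
  have hclosed : IsClosed (Set.range Wli) := Wli.isometry.isClosedEmbedding.isClosed_range
  have hsub : ((Submodule.span ℂ (Set.range g₂) : Submodule ℂ K₂) : Set K₂) ⊆ Set.range Wli := by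
    intro x hx
    have hle : Submodule.span ℂ (Set.range g₂) ≤ LinearMap.range Wli.toLinearMap := by
      rw [Submodule.span_le]
      rintro _ ⟨i, rfl⟩
      exact ⟨g₁ i, hWg i⟩
    exact hle hx
  have hdenseR : Dense (Set.range ⇑Wli) := hspan₂.mono hsub
  have hsurj : Function.Surjective Wli := by
    rw [← Set.range_eq_univ, ← hclosed.closure_eq, hdenseR.closure_eq]
  set Usharp : K₁ ≃ₗᵢ[ℂ] K₂ := LinearIsometryEquiv.ofSurjective Wli hsurj with hUsharp
  have hUs : ∀ x : K₁, Usharp x = W x := by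
    intro x
    rw [hUsharp, LinearIsometryEquiv.coe_ofSurjective]
    rfl
  -- commutation with the spectral measures
  have hcomm : ∀ ω : Set Ω, MeasurableSet ω → ∀ x : K₁, W (S₁ ω x) = S₂ ω (W x) := by
    intro ω hω
    have : W ∘L S₁ ω = S₂ ω ∘L W := by
      refine ContinuousLinearMap.ext_on hspan₁ ?_
      rintro _ ⟨⟨φ, ω', hω'⟩, rfl⟩
      show W (S₁ ω (S₁ ω' (adjoint V₁ φ))) = S₂ ω (W (g₁ (φ, ⟨ω', hω'⟩)))
      have l1 : S₁ ω (S₁ ω' (adjoint V₁ φ)) = g₁ (φ, ⟨ω ∩ ω', hω.inter hω'⟩) := by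
        show (S₁ ω * S₁ ω') (adjoint V₁ φ) = S₁ (ω ∩ ω') (adjoint V₁ φ)
        rw [← hS₁mul ω ω' hω hω']
      have l2 : S₂ ω (g₂ (φ, ⟨ω', hω'⟩)) = g₂ (φ, ⟨ω ∩ ω', hω.inter hω'⟩) := by
        show (S₂ ω * S₂ ω') (adjoint V₂ (U φ)) = S₂ (ω ∩ ω') (adjoint V₂ (U φ))
        rw [← hS₂mul ω ω' hω hω']
      rw [l1, hWg, hWg, ← l2]
    intro x
    exact ContinuousLinearMap.ext_iff.mp this x
  -- intertwining with the V's
  have hUV : ∀ x : K₁, U (V₁ x) = V₂ (W x) := by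
    have : (U.toLinearIsometry.toContinuousLinearMap ∘L V₁ : K₁ →L[ℂ] H₂) = V₂ ∘L W := by
      refine ContinuousLinearMap.ext_on hspan₁ ?_
      rintro _ ⟨⟨φ, ω, hω⟩, rfl⟩
      show U (V₁ (S₁ ω (adjoint V₁ φ))) = V₂ (W (g₁ (φ, ⟨ω, hω⟩)))
      have l1 : V₁ (S₁ ω (adjoint V₁ φ)) = M₁ ω φ := by rw [hN₁ ω hω]; rfl
      have l2 : V₂ (g₂ (φ, ⟨ω, hω⟩)) = M₂ ω (U φ) := by rw [hN₂ ω hω]; rfl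
      rw [l1, hWg, l2, ← hU ω hω (U φ), U.symm_apply_apply]
    intro x
    exact ContinuousLinearMap.ext_iff.mp this x
  refine ⟨Usharp, ?_, ?_⟩
  · intro ω hω y
    rw [hUs, hcomm ω hω, ← hUs, Usharp.apply_symm_apply]
  · intro x
    rw [hUs]
    exact hUV x
end
end

section
/- Let M be a framed POVM on Ω with values in the positive bounded operators on a complex Hilbert space H, with frame bounds 0 < A ≤ B < ∞, and let (S, H♯, V) be a Naimark representation of M with S(Ω) = 1, so that A·1 ≤ V V* ≤ B·1. Then V V* is invertible, and the canonical dual POVM M̃(ω) = (V V*)⁻¹ V S(ω) V* (V V*)⁻¹ is a framed POVM on Ω with frame bounds B⁻¹ ≤ A⁻¹; moreover M(Ω) M̃(Ω) = M̃(Ω) M(Ω) = 1_H. -/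
noncomputable section

open MeasureTheory ContinuousLinearMap

theorem aux_sq_le' {H : Type*} [NormedAddCommGroup H] [InnerProductSpace ℂ H]
    [CompleteSpace H] (T : H →L[ℂ] H) (hpos : T.IsPositive) (B : ℝ) (hB : 0 ≤ B)
    (hupp : ∀ x : H, RCLike.re (inner ℂ (T x) x : ℂ) ≤ B * ‖x‖ ^ 2) (g : H) :
    ‖T g‖ ^ 2 ≤ B * RCLike.re (inner ℂ (T g) g : ℂ) := by
  have hTsa : adjoint T = T := hpos.isSelfAdjoint
  have h1 : (inner ℂ (T g) (T g) : ℂ) = (‖T g‖^2 : ℝ) := by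
    rw [inner_self_eq_norm_sq_to_K]; norm_num
  have h2 : (inner ℂ (T (T g)) g : ℂ) = (‖T g‖^2 : ℝ) := by
    nth_rewrite 1 [← hTsa]
    rw [adjoint_inner_left, h1]
  have hgg : 0 ≤ RCLike.re (inner ℂ (T g) g : ℂ) := by
    have := hpos.2 g; rwa [ContinuousLinearMap.reApplyInnerSelf_apply] at this
  have hq : ∀ t : ℝ, 0 ≤ (RCLike.re (inner ℂ (T (T g)) (T g) : ℂ)) * (t * t)
      + (2 * ‖T g‖ ^ 2) * t + RCLike.re (inner ℂ (T g) g : ℂ) := by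
    intro t
    have h0 := hpos.2 (g + (t : ℂ) • (T g))
    rw [ContinuousLinearMap.reApplyInnerSelf_apply] at h0
    have hrw : (inner ℂ (T (g + (t:ℂ) • (T g))) (g + (t:ℂ) • (T g)) : ℂ)
        = inner ℂ (T g) g + (t:ℂ) * inner ℂ (T g) (T g) + (t:ℂ) * inner ℂ (T (T g)) g
          + (t:ℂ) * (t:ℂ) * inner ℂ (T (T g)) (T g) := by
      rw [map_add, _root_.map_smul, inner_add_left, inner_add_right, inner_add_right,
        inner_smul_left, inner_smul_left, inner_smul_right, inner_smul_right,
        Complex.conj_ofReal]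
      ring
    rw [hrw, h1, h2] at h0
    simp only [RCLike.re_to_complex, RCLike.im_to_complex, map_add, RCLike.mul_re, RCLike.mul_im, RCLike.ofReal_re, RCLike.ofReal_im,
      Complex.ofReal_re, Complex.ofReal_im, Complex.add_re, Complex.mul_re, Complex.mul_im] at h0
    simp only [RCLike.re_to_complex]
    ring_nf at h0 ⊢
    linarith [h0]
  have hd := discrim_le_zero hq
  rw [discrim] at hd
  have hTgu : RCLike.re (inner ℂ (T (T g)) (T g) : ℂ) ≤ B * ‖T g‖^2 := hupp (T g)
  rcases eq_or_ne (‖T g‖) 0 with h | h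
  · rw [h]; nlinarith [mul_nonneg hB hgg]
  · have h2 : 0 < ‖T g‖^2 := by positivity
    nlinarith [hd, hgg, hTgu, h2]


/-- **The canonical dual POVM.** Let `M` be a framed POVM with frame bounds `0 < A ≤ B` and
let `(S, H♯, V)` be a Naimark representation of `M` with `S(Ω) = 1` (so that
`A·1 ≤ V V* ≤ B·1`). Then `V V*` is invertible, with inverse `W`, and the canonical dual
POVM `M̃(ω) = W V S(ω) V* W` is a framed POVM with frame bounds `B⁻¹ ≤ A⁻¹`; moreover
`M(Ω) M̃(Ω) = M̃(Ω) M(Ω) = 1`. -/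
theorem canonical_dual_povm
    {Ω : Type*} [TopologicalSpace Ω] [MeasurableSpace Ω] [BorelSpace Ω]
    {H : Type*} [NormedAddCommGroup H] [InnerProductSpace ℂ H] [CompleteSpace H]
    {H' : Type*} [NormedAddCommGroup H'] [InnerProductSpace ℂ H'] [CompleteSpace H']
    (M : Set Ω → H →L[ℂ] H) (A B : ℝ) (hM : IsFramedPOVM M A B)
    (S : Set Ω → H' →L[ℂ] H') (V : H' →L[ℂ] H) (hrep : IsNaimarkRep M S V) :
    ∃ W : H →L[ℂ] H,
      (W ∘L (V ∘L adjoint V) = 1 ∧ (V ∘L adjoint V) ∘L W = 1) ∧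
      IsFramedPOVM (fun ω : Set Ω => W ∘L (V ∘L S ω ∘L adjoint V) ∘L W) B⁻¹ A⁻¹ ∧
      M Set.univ ∘L (W ∘L (V ∘L S Set.univ ∘L adjoint V) ∘L W) = 1 ∧
      (W ∘L (V ∘L S Set.univ ∘L adjoint V) ∘L W) ∘L M Set.univ = 1 := by
  obtain ⟨hSspec, hSuniv, hMrep⟩ := hrep
  obtain ⟨⟨hMpos, hMmeas⟩, hA, hAB, hlo, hhi⟩ := hM
  have hB : 0 < B := lt_of_lt_of_le hA hAB
  set T : H →L[ℂ] H := V ∘L adjoint V with hTdef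
  have hMuniv : M Set.univ = T := by
    rw [hMrep Set.univ MeasurableSet.univ, hSuniv, hTdef]
    ext x; simp
  have hTpos : T.IsPositive := hMuniv ▸ hMpos Set.univ MeasurableSet.univ
  have hTadj : adjoint T = T := hTpos.isSelfAdjoint
  -- auxiliary inner ℂ product identities
  have hself : ∀ x : H, (inner ℂ x x : ℂ) = (‖x‖ ^ 2 : ℝ) := by
    intro x; rw [inner_self_eq_norm_sq_to_K]; norm_num
  have hsm : ∀ (r : ℝ) (x : H), (inner ℂ ((r : ℂ) • x) x : ℂ) = ((r * ‖x‖ ^ 2 : ℝ) : ℂ) := by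
    intro r x
    rw [inner_smul_left, Complex.conj_ofReal, hself x]
    push_cast; ring
  -- numeric bounds
  have hlo' : ∀ x : H, A * ‖x‖ ^ 2 ≤ RCLike.re (inner ℂ (T x) x : ℂ) := by
    intro x
    have h := hlo.2 x
    rw [ContinuousLinearMap.reApplyInnerSelf_apply] at h
    have hx : ((M Set.univ - (A : ℂ) • 1) x) = T x - (A : ℂ) • x := by
      simp [hMuniv]
    rw [hx, inner_sub_left, hsm, map_sub] at h
    simp only [RCLike.re_to_complex, Complex.ofReal_re] at h ⊢
    linarith
  have hhi' : ∀ x : H, RCLike.re (inner ℂ (T x) x : ℂ) ≤ B * ‖x‖ ^ 2 := by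
    intro x
    have h := hhi.2 x
    rw [ContinuousLinearMap.reApplyInnerSelf_apply] at h
    have hx : (((B : ℂ) • 1 - M Set.univ) x) = (B : ℂ) • x - T x := by
      simp [hMuniv]
    rw [hx, inner_sub_left, hsm, map_sub] at h
    simp only [RCLike.re_to_complex, Complex.ofReal_re] at h ⊢
    linarith
  -- lower norm bound
  have hAnorm : ∀ x : H, A * ‖x‖ ≤ ‖T x‖ := by
    intro x
    rcases eq_or_ne (‖x‖) 0 with h | h
    · rw [h, mul_zero]; exact norm_nonneg _
    · have h1 : RCLike.re (inner ℂ (T x) x : ℂ) ≤ ‖T x‖ * ‖x‖ :=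
        le_trans (RCLike.re_le_norm _) (norm_inner_le_norm _ _)
      have h2 := hlo' x
      have hx : 0 < ‖x‖ := lt_of_le_of_ne (norm_nonneg _) (Ne.symm h)
      nlinarith
  -- injectivity and surjectivity of T
  have hker : LinearMap.ker (T : H →ₗ[ℂ] H) = ⊥ := by
    rw [LinearMap.ker_eq_bot]
    intro x y hxy
    have hxy : T x = T y := hxy
    have h1 : A * ‖x - y‖ ≤ ‖T (x - y)‖ := hAnorm (x - y)
    rw [map_sub, hxy, sub_self, norm_zero] at h1
    have h2 : ‖x - y‖ ≤ 0 := by nlinarith [norm_nonneg (x - y)]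
    have h3 := le_antisymm h2 (norm_nonneg _)
    rwa [norm_eq_zero, sub_eq_zero] at h3
  have hanti : AntilipschitzWith (Real.toNNReal A)⁻¹ T := by
    apply T.antilipschitz_of_bound
    intro x
    rw [NNReal.coe_inv, Real.coe_toNNReal _ hA.le, inv_mul_eq_div, le_div_iff₀ hA]
    calc ‖x‖ * A = A * ‖x‖ := by ring
    _ ≤ ‖T x‖ := hAnorm x
  have hclosed : IsClosed (Set.range T) := hanti.isClosed_range T.uniformContinuous
  have hrange : LinearMap.range (T : H →ₗ[ℂ] H) = ⊤ := by
    have hcl : IsClosed ((LinearMap.range (T : H →ₗ[ℂ] H) : Submodule ℂ H) : Set H) := by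
      have he : ((LinearMap.range (T : H →ₗ[ℂ] H) : Submodule ℂ H) : Set H) = Set.range T := by
        ext x; simp [LinearMap.mem_range]
      rw [he]; exact hclosed
    have : CompleteSpace ((LinearMap.range (T : H →ₗ[ℂ] H) : Submodule ℂ H) : Set H) :=
      hcl.completeSpace_coe
    rw [← Submodule.orthogonal_eq_bot_iff, Submodule.eq_bot_iff]
    intro x hx
    have hTx : (inner ℂ (T x) x : ℂ) = 0 := hx (T x) (LinearMap.mem_range_self _ x)
    have h1 := hlo' x
    rw [hTx] at h1
    simp only [map_zero] at h1
    have h2 : ‖x‖ ^ 2 ≤ 0 := by nlinarith [hA]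
    have h3 : ‖x‖ ^ 2 = 0 := le_antisymm h2 (sq_nonneg _)
    rw [sq_eq_zero_iff, norm_eq_zero] at h3
    exact h3
  -- the inverse W
  let e : H ≃L[ℂ] H := ContinuousLinearEquiv.ofBijective T hker hrange
  have he : ∀ x, e x = T x := fun x => rfl
  refine ⟨(e.symm : H →L[ℂ] H), ?_⟩
  set W : H →L[ℂ] H := (e.symm : H →L[ℂ] H) with hWdef
  have hWT : W ∘L T = 1 := by
    ext x
    simp only [ContinuousLinearMap.coe_comp', Function.comp_apply,
      ContinuousLinearMap.one_apply, hWdef, ContinuousLinearEquiv.coe_coe]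
    rw [← he]
    exact e.symm_apply_apply x
  have hTW : T ∘L W = 1 := by
    ext x
    simp only [ContinuousLinearMap.coe_comp', Function.comp_apply,
      ContinuousLinearMap.one_apply, hWdef, ContinuousLinearEquiv.coe_coe]
    rw [← he]
    exact e.apply_symm_apply x
  have hTW' : ∀ x, T (W x) = x := by
    intro x
    have h := congrArg (fun f => f x) hTW; simpa using h
  -- W is self-adjoint
  have h1 : adjoint W ∘L T = 1 := by
    have h := congrArg adjoint hTW
    rwa [ContinuousLinearMap.adjoint_comp, hTadj, ContinuousLinearMap.one_def, adjoint_id,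
      ← ContinuousLinearMap.one_def] at h
  have hWsa : adjoint W = W := by
    have h2 : (adjoint W ∘L T) ∘L W = W := by rw [h1]; ext x; simp
    conv_rhs => rw [← h2]
    ext x
    simp only [ContinuousLinearMap.coe_comp', Function.comp_apply]
    rw [hTW' x]
  have hWsa' : IsSelfAdjoint W := ContinuousLinearMap.isSelfAdjoint_iff'.mpr hWsa
  have hWinner : ∀ a b : H, (inner ℂ a (W b) : ℂ) = inner ℂ (W a) b := by
    intro a b
    nth_rewrite 1 [← hWsa]
    exact ContinuousLinearMap.adjoint_inner_right W a b
  -- the middle operator at univ is W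
  have hmid : W ∘L (V ∘L S Set.univ ∘L adjoint V) ∘L W = W := by
    ext x
    simp only [ContinuousLinearMap.coe_comp', Function.comp_apply, hSuniv,
      ContinuousLinearMap.one_apply]
    exact congrArg W (hTW' x)
  -- conjugation identity
  have hconj : ∀ ω : Set Ω, MeasurableSet ω →
      (W ∘L (V ∘L S ω ∘L adjoint V) ∘L W) = W ∘L M ω ∘L adjoint W := by
    intro ω hω
    rw [hMrep ω hω, hWsa]
  refine ⟨⟨hWT, hTW⟩, ?_, ?_, ?_⟩
  · -- framed POVM
    refine ⟨⟨?_, ?_⟩, inv_pos.mpr hB, ?_, ?_, ?_⟩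
    · intro ω hω
      beta_reduce
      rw [hconj ω hω]
      exact (hMpos ω hω).conj_adjoint W
    · intro f
      obtain ⟨μ, hreg, hμ⟩ := hMmeas (W f)
      refine ⟨μ, hreg, fun ω hω => ?_⟩
      rw [hμ ω hω, hMrep ω hω]
      simp only [ContinuousLinearMap.coe_comp', Function.comp_apply]
      rw [hWinner]
    · exact inv_anti₀ hA hAB
    · -- W - B⁻¹ • 1 positive
      beta_reduce
      rw [hmid]
      constructor
      · refine ContinuousLinearMap.isSelfAdjoint_iff_isSymmetric.mp
          (hWsa'.sub (IsSelfAdjoint.smul ?_ (IsSelfAdjoint.one (H →L[ℂ] H))))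
        rw [isSelfAdjoint_iff, Complex.star_def, Complex.conj_ofReal]
      · intro x
        rw [ContinuousLinearMap.reApplyInnerSelf_apply]
        have hsub : ((W - ((B⁻¹ : ℝ) : ℂ) • 1) x) = W x - ((B⁻¹ : ℝ) : ℂ) • x := by simp
        rw [hsub, inner_sub_left, hsm, map_sub]
        simp only [RCLike.re_to_complex, Complex.ofReal_re]
        have key := aux_sq_le' T hTpos B hB.le hhi' (W x)
        have hre1 : RCLike.re (inner ℂ (T (W x)) (W x) : ℂ) = RCLike.re (inner ℂ x (W x) : ℂ) := by
          rw [hTW' x]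
        have hre2 : RCLike.re (inner ℂ x (W x) : ℂ) = RCLike.re (inner ℂ (W x) x : ℂ) := by
          rw [← inner_conj_symm, RCLike.conj_re]
        have hxn : ‖T (W x)‖ = ‖x‖ := by rw [hTW' x]
        rw [hre1, hre2, hxn] at key
        rw [sub_nonneg, inv_mul_eq_div, div_le_iff₀ hB]
        simp only [RCLike.re_to_complex] at key
        linarith
    · -- A⁻¹ • 1 - W positive
      beta_reduce
      rw [hmid]
      constructor
      · refine ContinuousLinearMap.isSelfAdjoint_iff_isSymmetric.mp
          (IsSelfAdjoint.sub (IsSelfAdjoint.smul ?_ (IsSelfAdjoint.one (H →L[ℂ] H))) hWsa')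
        rw [isSelfAdjoint_iff, Complex.star_def, Complex.conj_ofReal]
      · intro x
        rw [ContinuousLinearMap.reApplyInnerSelf_apply]
        have hsub : (((( A⁻¹ : ℝ) : ℂ) • 1 - W) x) = ((A⁻¹ : ℝ) : ℂ) • x - W x := by simp
        rw [hsub, inner_sub_left, hsm, map_sub]
        simp only [RCLike.re_to_complex, Complex.ofReal_re]
        have h1 : RCLike.re (inner ℂ (W x) (T (W x)) : ℂ) = RCLike.re (inner ℂ (W x) x : ℂ) := by
          rw [hTW' x]
        have h2 : RCLike.re (inner ℂ (W x) (T (W x)) : ℂ) ≤ ‖W x‖ * ‖T (W x)‖ :=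
          le_trans (RCLike.re_le_norm _) (norm_inner_le_norm _ _)
        have h3 : A * ‖W x‖ ≤ ‖T (W x)‖ := hAnorm (W x)
        have hxn : ‖T (W x)‖ = ‖x‖ := by rw [hTW' x]
        rw [h1, hxn] at h2
        rw [hxn] at h3
        rw [sub_nonneg, inv_mul_eq_div, le_div_iff₀ hA]
        simp only [RCLike.re_to_complex] at h2
        nlinarith [norm_nonneg (W x), norm_nonneg x]
  · rw [hmid, hMuniv]; exact hTW
  · rw [hmid, hMuniv]; exact hWT
end
end

section
/- Let (Ω, B, μ) be a measure space with Ω a topological space and B its Borel sets, let Φ : Ω → H be a generalized frame for a separable complex Hilbert space H with unit-norm values and frame bounds 0 < A ≤ B < ∞, and let M(ω) = ∫_ω Π_{Φ(t)} dμ(t) (weakly) be the associated framed POVM. Take H♯ = L²(Ω, μ), the spectral POVM S defined by (S(ω) u)(t) = 1_ω(t) u(t) for u ∈ L²(Ω, μ), and V : L²(Ω, μ) → H given by V(u) = ∫_Ω u(t) Φ(t) dμ(t) (weakly). Then V is a bounded linear map, its adjoint is (V* f)(t) = ⟨Φ(t), f⟩, and M(ω) = V S(ω) V* for every Borel ω ⊆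 Ω; i.e., (S, L²(Ω, μ), V) is a Naimark representation of M. -/
noncomputable section

open MeasureTheory ContinuousLinearMap

/-- **Naimark representation of a generalized frame.** Let `Φ : Ω → H` be a unit-norm
generalized frame with frame bounds `0 < A ≤ B` over `(Ω, 𝔅, μ)`, and let
`M(ω) = ∫_ω Π_{Φ(t)} dμ(t)` (weakly) be the associated framed POVM. Let `S` be the spectral
POVM on `L²(Ω, μ)` of multiplication by indicator functions, `(S ω u)(t) = 1_ω(t) u(t)`.
Then `S` is multiplicative with `S(Ω) = 1`, and there is a bounded linear map
`V : L²(Ω, μ) → H` with `V u = ∫_Ω u(t) Φ(t) dμ(t)` weakly, whose adjoint is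
`(V* f)(t) = ⟪Φ(t), f⟫`, such that `M(ω) = V S(ω) V*` for all Borel `ω`; i.e.
`(S, L²(Ω, μ), V)` is a Naimark representation of `M`. -/
theorem generalized_frame_naimark_representation
    {Ω : Type*} [TopologicalSpace Ω] [MeasurableSpace Ω] [BorelSpace Ω]
    {H : Type*} [NormedAddCommGroup H] [InnerProductSpace ℂ H] [CompleteSpace H]
    [TopologicalSpace.SeparableSpace H] [MeasurableSpace H] [BorelSpace H]
    (μ : Measure Ω) [μ.Regular]
    (Φ : Ω → H) (hΦ : Measurable Φ) (hΦnorm : ∀ t : Ω, ‖Φ t‖ = 1)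
    (A B : ℝ) (hA : 0 < A) (hAB : A ≤ B)
    (hframe : ∀ f : H,
      A * ‖f‖ ^ 2 ≤ ∫ t : Ω, ‖(inner ℂ (Φ t) f : ℂ)‖ ^ 2 ∂μ ∧
      (∫ t : Ω, ‖(inner ℂ (Φ t) f : ℂ)‖ ^ 2 ∂μ) ≤ B * ‖f‖ ^ 2)
    (M : Set Ω → H →L[ℂ] H)
    (hM : ∀ ω : Set Ω, MeasurableSet ω → ∀ f g : H,
      (inner ℂ f (M ω g) : ℂ) = ∫ t in ω, (inner ℂ (Φ t) g : ℂ) * (inner ℂ f (Φ t) : ℂ) ∂μ)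
    (S : Set Ω → MeasureTheory.Lp ℂ 2 μ →L[ℂ] MeasureTheory.Lp ℂ 2 μ)
    (hS : ∀ ω : Set Ω, MeasurableSet ω → ∀ u : MeasureTheory.Lp ℂ 2 μ,
      (S ω u : Ω → ℂ) =ᵐ[μ] ω.indicator (u : Ω → ℂ)) :
    (∀ ω₁ ω₂ : Set Ω, MeasurableSet ω₁ → MeasurableSet ω₂ →
      S (ω₁ ∩ ω₂) = S ω₁ * S ω₂) ∧
    S Set.univ = 1 ∧
    ∃ V : MeasureTheory.Lp ℂ 2 μ →L[ℂ] H,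
      (∀ (u : MeasureTheory.Lp ℂ 2 μ) (f : H),
        (inner ℂ f (V u) : ℂ) = ∫ t : Ω, u t * (inner ℂ f (Φ t) : ℂ) ∂μ) ∧
      (∀ f : H, (adjoint V f : Ω → ℂ) =ᵐ[μ] fun t : Ω => (inner ℂ (Φ t) f : ℂ)) ∧
      ∀ ω : Set Ω, MeasurableSet ω → M ω = V ∘L S ω ∘L adjoint V := by
  classical
  have hind : ∀ (ω : Set Ω) (h₁ h₂ : Ω → ℂ), h₁ =ᵐ[μ] h₂ →
      ω.indicator h₁ =ᵐ[μ] ω.indicator h₂ := by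
    intro ω h₁ h₂ h
    filter_upwards [h] with t ht
    simp only [Set.indicator_apply, ht]
  -- measurability and MemLp of the coefficient functions
  have hmeas : ∀ f : H, Measurable fun t => (inner ℂ (Φ t) f : ℂ) := fun f =>
    (continuous_id.inner continuous_const).measurable.comp hΦ
  have hmem : ∀ f : H, MemLp (fun t => (inner ℂ (Φ t) f : ℂ)) 2 μ := by
    intro f
    rcases eq_or_ne f 0 with rfl | hf
    · simpa [inner_zero_right] using (zero_memLp : MemLp (0 : Ω → ℂ) 2 μ)
    · have hint : Integrable (fun t => ‖(inner ℂ (Φ t) f : ℂ)‖ ^ 2) μ := by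
        by_contra hni
        have h0 := integral_undef hni
        have h1 := (hframe f).1
        rw [h0] at h1
        have hfp : 0 < ‖f‖ := norm_pos_iff.2 hf
        exact absurd h1 (not_le.2 (mul_pos hA (pow_pos hfp 2)))
      exact (memLp_two_iff_integrable_sq_norm (hmeas f).aestronglyMeasurable).2 hint
  set g : H → MeasureTheory.Lp ℂ 2 μ := fun f => (hmem f).toLp _ with hg_def
  have hg_coe : ∀ f : H, (g f : Ω → ℂ) =ᵐ[μ] fun t => (inner ℂ (Φ t) f : ℂ) := fun f =>
    (hmem f).coeFn_toLp
  have hg_add : ∀ f₁ f₂ : H, g (f₁ + f₂) = g f₁ + g f₂ := by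
    intro f₁ f₂
    apply MeasureTheory.Lp.ext
    filter_upwards [hg_coe (f₁ + f₂), hg_coe f₁, hg_coe f₂,
      MeasureTheory.Lp.coeFn_add (g f₁) (g f₂)] with t ha hb hc hd
    rw [ha, hd, Pi.add_apply, hb, hc, inner_add_right]
  have hg_smul : ∀ (c : ℂ) (f : H), g (c • f) = c • g f := by
    intro c f
    apply MeasureTheory.Lp.ext
    filter_upwards [hg_coe (c • f), hg_coe f,
      MeasureTheory.Lp.coeFn_smul c (g f)] with t ha hb hc
    rw [ha, hc, Pi.smul_apply, hb, inner_smul_right]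
    simp
  have hBnn : (0 : ℝ) ≤ B := le_trans hA.le hAB
  have hWbound : ∀ f : H, ‖g f‖ ≤ Real.sqrt B * ‖f‖ := by
    intro f
    have hnorm : ‖g f‖ ^ 2 = ∫ t, ‖(inner ℂ (Φ t) f : ℂ)‖ ^ 2 ∂μ := by
      have hin : (inner ℂ (g f) (g f) : ℂ) =
          ∫ t, ((‖(inner ℂ (Φ t) f : ℂ)‖ ^ 2 : ℝ) : ℂ) ∂μ := by
        rw [MeasureTheory.L2.inner_def]
        refine integral_congr_ae ?_
        filter_upwards [hg_coe f] with t ht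
        rw [RCLike.inner_apply, ht, RCLike.mul_conj]
        norm_cast
      have hre : (∫ t, ((‖(inner ℂ (Φ t) f : ℂ)‖ ^ 2 : ℝ) : ℂ) ∂μ) =
          ((∫ t, ‖(inner ℂ (Φ t) f : ℂ)‖ ^ 2 ∂μ : ℝ) : ℂ) := integral_ofReal (𝕜 := ℂ)
      have h2 := inner_self_eq_norm_sq (𝕜 := ℂ) (g f)
      rw [← h2, hin, hre]
      simp [RCLike.re_to_complex]
    have key : ‖g f‖ ^ 2 ≤ B * ‖f‖ ^ 2 := hnorm ▸ (hframe f).2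
    have h1 : ‖g f‖ ≤ Real.sqrt (B * ‖f‖ ^ 2) := by
      rw [← Real.sqrt_sq (norm_nonneg (g f))]
      exact Real.sqrt_le_sqrt key
    calc ‖g f‖ ≤ Real.sqrt (B * ‖f‖ ^ 2) := h1
      _ = Real.sqrt B * ‖f‖ := by
          rw [Real.sqrt_mul hBnn, Real.sqrt_sq (norm_nonneg f)]
  let Wl : H →ₗ[ℂ] MeasureTheory.Lp ℂ 2 μ :=
    { toFun := g, map_add' := hg_add, map_smul' := hg_smul }
  let W : H →L[ℂ] MeasureTheory.Lp ℂ 2 μ := Wl.mkContinuous (Real.sqrt B) hWbound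
  have hW_coe : ∀ f : H, (W f : Ω → ℂ) =ᵐ[μ] fun t => (inner ℂ (Φ t) f : ℂ) := fun f =>
    hg_coe f
  refine ⟨?_, ?_, adjoint W, ?_, ?_, ?_⟩
  · -- multiplicativity
    intro ω₁ ω₂ h₁ h₂
    ext u
    have e1 := hS _ (h₁.inter h₂) u
    have e2 := hS ω₂ h₂ u
    have e3 := hS ω₁ h₁ (S ω₂ u)
    have e4 : ω₁.indicator ((S ω₂ u : Ω → ℂ)) =ᵐ[μ] (ω₁ ∩ ω₂).indicator (u : Ω → ℂ) := by
      refine (hind ω₁ _ _ e2).trans ?_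
      rw [Set.indicator_indicator]
    refine e1.trans ?_
    rw [ContinuousLinearMap.mul_apply]
    exact (e3.trans e4).symm
  · -- S univ = 1
    ext u
    rw [ContinuousLinearMap.one_apply]
    refine (hS Set.univ MeasurableSet.univ u).trans ?_
    rw [Set.indicator_univ]
  · -- weak integral formula for V = adjoint W
    intro u f
    rw [adjoint_inner_right, MeasureTheory.L2.inner_def]
    refine integral_congr_ae ?_
    filter_upwards [hW_coe f] with t ht
    rw [RCLike.inner_apply, ht, inner_conj_symm, mul_comm]
  · -- adjoint of V is W
    intro f
    rw [adjoint_adjoint]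
    exact hW_coe f
  · -- Naimark relation
    intro ω hω
    ext gv
    apply ext_inner_left ℂ
    intro f
    rw [hM ω hω f gv, ContinuousLinearMap.comp_apply, ContinuousLinearMap.comp_apply,
      adjoint_adjoint, adjoint_inner_right, MeasureTheory.L2.inner_def,
      ← integral_indicator hω]
    refine integral_congr_ae ?_
    filter_upwards [hW_coe f, hS ω hω (W gv), hW_coe gv] with t h1 h2 h3
    rw [RCLike.inner_apply, h1, inner_conj_symm, h2]
    by_cases ht : t ∈ ω
    · rw [Set.indicator_of_mem ht, Set.indicator_of_mem ht, h3, mul_comm]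
    · rw [Set.indicator_of_notMem ht, Set.indicator_of_notMem ht, zero_mul]
end
end

section
/- Let {(W_k, w_k) : k ∈ K} be a fusion frame for a separable complex Hilbert space H with frame bounds 0 < A ≤ B < ∞ and K countable, and assume Σ_{k ∈ K} w_k² < ∞. Let H♯ = ⊕_{k ∈ K} W_k be the Hilbert space direct sum, let S(J) for J ⊆ K be the orthogonal projection of H♯ onto ⊕_{k ∈ J} W_k, and define V : H♯ → H by V({f_k}) = Σ_{k ∈ K} w_k f_k (each f_k ∈ W_k ⊆ H). Then the series defining V converges absolutely in H, V is bounded with ‖V‖ ≤ (Σ_{k ∈ K} w_k²)^{1/2}, the adjoint is V*(φ) = {w_k Π_k(φ)}_{k ∈ K}, S is a spectral POVM with S(K) = 1, M(J) = V S(J) V* for all J ⊆ K where M(J) = Σ_{k ∈ J} w_k² Π_k is the framed POVM of the fusion frame, and A·1 ≤ V V* ≤ B·1. If moreover the fusion frame is tight (A = B), then V V* = A·1. -/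
noncomputable section

open MeasureTheory ContinuousLinearMap

open scoped Classical

open scoped ENNReal NNReal

section Aux

variable {K : Type*}

/-- Cauchy–Schwarz for infinite sums of nonnegative reals. -/
lemma aux_cs_summable {a b : K → ℝ} (ha : ∀ k, 0 ≤ a k) (hb : ∀ k, 0 ≤ b k)
    (ha2 : Summable fun k => a k ^ 2) (hb2 : Summable fun k => b k ^ 2) :
    Summable fun k => a k * b k := by
  refine Summable.of_nonneg_of_le (fun k => mul_nonneg (ha k) (hb k)) (fun k => ?_)
    ((ha2.add hb2).div_const 2)
  have := two_mul_le_add_sq (a k) (b k)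
  linarith

lemma aux_cs_tsum {a b : K → ℝ} (ha : ∀ k, 0 ≤ a k) (hb : ∀ k, 0 ≤ b k)
    (ha2 : Summable fun k => a k ^ 2) (hb2 : Summable fun k => b k ^ 2) :
    ∑' k, a k * b k ≤ Real.sqrt (∑' k, a k ^ 2) * Real.sqrt (∑' k, b k ^ 2) := by
  refine Summable.tsum_le_of_sum_le (aux_cs_summable ha hb ha2 hb2) (fun s => ?_)
  rw [← Real.sqrt_mul (tsum_nonneg fun k => sq_nonneg _)]
  rw [Real.le_sqrt (Finset.sum_nonneg fun k _ => mul_nonneg (ha k) (hb k))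
    (mul_nonneg (tsum_nonneg fun k => sq_nonneg _) (tsum_nonneg fun k => sq_nonneg _))]
  calc (∑ k ∈ s, a k * b k) ^ 2 ≤ (∑ k ∈ s, a k ^ 2) * ∑ k ∈ s, b k ^ 2 :=
        Finset.sum_mul_sq_le_sq_mul_sq s a b
    _ ≤ (∑' k, a k ^ 2) * ∑' k, b k ^ 2 :=
        mul_le_mul (Summable.sum_le_tsum s (fun k _ => sq_nonneg _) ha2)
          (Summable.sum_le_tsum s (fun k _ => sq_nonneg _) hb2)
          (Finset.sum_nonneg fun k _ => sq_nonneg _) (tsum_nonneg fun k => sq_nonneg _)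

end Aux

set_option maxHeartbeats 1000000 in
set_option synthInstance.maxHeartbeats 400000 in
/-- **Naimark representation of a fusion frame.** Let `{(W k, w k)}_{k ∈ K}` be a fusion
frame for `H` with bounds `0 < A ≤ B`, with `∑ k, (w k)² < ∞`, let `H♯ = ⊕_k W k` (the
`ℓ²`-direct sum), let `S J` be the orthogonal projection onto `⊕_{k ∈ J} W k`, and let
`M(J) = ∑_{k ∈ J} w_k² Π_k` (weakly) be the framed POVM of the fusion frame. Then the
series `V {f_k} = ∑ k, w k • f k` converges absolutely and defines a bounded linear map
`V : H♯ → H` with `‖V‖ ≤ (∑ k, w_k²)^½`, adjoint `V* φ = {w k • Π_k φ}`, `S` is a spectral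
POVM with `S(K) = 1`, `M(J) = V S(J) V*` for all `J ⊆ K`, and `A·1 ≤ V V* ≤ B·1`; if the
fusion frame is tight (`A = B`) then `V V* = A·1`. -/
theorem fusion_frame_naimark_representation
    {K : Type*} [Countable K]
    {H : Type*} [NormedAddCommGroup H] [InnerProductSpace ℂ H] [CompleteSpace H]
    [TopologicalSpace.SeparableSpace H]
    (W : K → Submodule ℂ H) [∀ k : K, CompleteSpace (W k)]
    (w : K → ℝ) (hw : ∀ k : K, 0 ≤ w k) (hw₂ : Summable fun k : K => w k ^ 2)
    (A B : ℝ) (hA : 0 < A) (hAB : A ≤ B)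
    (hframe : ∀ f : H,
      A * ‖f‖ ^ 2 ≤ ∑' k : K, w k ^ 2 * ‖((W k).orthogonalProjectionOnto f : H)‖ ^ 2 ∧
      (∑' k : K, w k ^ 2 * ‖((W k).orthogonalProjectionOnto f : H)‖ ^ 2) ≤ B * ‖f‖ ^ 2)
    (M : Set K → H →L[ℂ] H)
    (hM : ∀ (J : Set K) (f g : H),
      (inner ℂ f (M J g) : ℂ) =
        ∑' k : J, ((w (k : K)) ^ 2 : ℂ) *
          inner ℂ f (((W (k : K)).orthogonalProjectionOnto g : H)))
    (S : Set K → lp (fun k : K => W k) 2 →L[ℂ] lp (fun k : K => W k) 2)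
    (hS : ∀ (J : Set K) (f : lp (fun k : K => W k) 2) (k : K),
      S J f k = if k ∈ J then f k else 0) :
    (∀ f : lp (fun k : K => W k) 2,
      Summable fun k : K => ‖(w k : ℂ) • (f k : H)‖) ∧
    ∃ V : lp (fun k : K => W k) 2 →L[ℂ] H,
      (∀ f : lp (fun k : K => W k) 2,
        HasSum (fun k : K => (w k : ℂ) • (f k : H)) (V f)) ∧
      ‖V‖ ≤ Real.sqrt (∑' k : K, w k ^ 2) ∧
      (∀ (φ : H) (k : K),
        (adjoint V φ k : H) = (w k : ℂ) • ((W k).orthogonalProjectionOnto φ : H)) ∧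
      (∀ J₁ J₂ : Set K, S (J₁ ∩ J₂) = S J₁ * S J₂) ∧
      S Set.univ = 1 ∧
      (∀ J : Set K, M J = V ∘L S J ∘L adjoint V) ∧
      ((V ∘L adjoint V - (A : ℂ) • 1).IsPositive ∧
        ((B : ℂ) • 1 - V ∘L adjoint V).IsPositive) ∧
      (A = B → V ∘L adjoint V = (A : ℂ) • 1) := by
  -- norms of coordinates are square-summable
  have hsq : ∀ f : lp (fun k : K => W k) 2, Summable fun k => ‖(f k : H)‖ ^ 2 := by
    intro f
    have h := (memℓp_gen_iff (by norm_num : (0:ℝ) < (2:ℝ≥0∞).toReal)).1 (lp.memℓp f)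
    have : (fun k => ‖f k‖ ^ ((2:ℝ≥0∞)).toReal) = fun k => ‖(f k : H)‖ ^ (2:ℕ) := by
      funext k
      rw [Submodule.coe_norm, show ((2:ℝ≥0∞)).toReal = ((2:ℕ):ℝ) by norm_num,
        Real.rpow_natCast]
    rwa [this] at h
  have hnorm_eq : ∀ f : lp (fun k : K => W k) 2,
      ‖f‖ ^ 2 = ∑' k, ‖(f k : H)‖ ^ 2 := by
    intro f
    have h := lp.norm_rpow_eq_tsum (by norm_num : (0:ℝ) < (2:ℝ≥0∞).toReal) f
    have e1 : ‖f‖ ^ ((2:ℝ≥0∞)).toReal = ‖f‖ ^ (2:ℕ) := by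
      rw [show ((2:ℝ≥0∞)).toReal = ((2:ℕ):ℝ) by norm_num, Real.rpow_natCast]
    have e2 : (fun k => ‖f k‖ ^ ((2:ℝ≥0∞)).toReal) = fun k => ‖(f k : H)‖ ^ (2:ℕ) := by
      funext k
      rw [Submodule.coe_norm, show ((2:ℝ≥0∞)).toReal = ((2:ℕ):ℝ) by norm_num,
        Real.rpow_natCast]
    rw [e1, e2] at h
    exact_mod_cast h
  -- summability of weighted coordinates
  have hnw : ∀ (k : K) (x : H), ‖(w k : ℂ) • x‖ = w k * ‖x‖ := by
    intro k x
    rw [norm_smul, Complex.norm_real, Real.norm_eq_abs, abs_of_nonneg (hw k)]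
  have hsumm : ∀ f : lp (fun k : K => W k) 2,
      Summable fun k : K => ‖(w k : ℂ) • (f k : H)‖ := by
    intro f
    simp only [hnw]
    exact aux_cs_summable hw (fun k => norm_nonneg _) hw₂ (hsq f)
  have hcs : ∀ f : lp (fun k : K => W k) 2,
      ∑' k, ‖(w k : ℂ) • (f k : H)‖ ≤ Real.sqrt (∑' k, w k ^ 2) * ‖f‖ := by
    intro f
    calc ∑' k, ‖(w k : ℂ) • (f k : H)‖ = ∑' k, w k * ‖(f k : H)‖ := by simp only [hnw]
      _ ≤ Real.sqrt (∑' k, w k ^ 2) * Real.sqrt (∑' k, ‖(f k : H)‖ ^ 2) :=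
          aux_cs_tsum hw (fun k => norm_nonneg _) hw₂ (hsq f)
      _ = Real.sqrt (∑' k, w k ^ 2) * ‖f‖ := by
          rw [← hnorm_eq f, Real.sqrt_sq (norm_nonneg f)]
  -- the linear map V₀
  set V₀ : lp (fun k : K => W k) 2 →ₗ[ℂ] H :=
    { toFun := fun f => ∑' k, (w k : ℂ) • (f k : H)
      map_add' := by
        intro f g
        dsimp only
        have : (fun k => (w k : ℂ) • (((f + g) k : H))) =
            fun k => (w k : ℂ) • (f k : H) + (w k : ℂ) • (g k : H) := by
          funext k
          have : (f + g) k = f k + g k := by rw [lp.coeFn_add]; rfl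
          rw [this, Submodule.coe_add, smul_add]
        rw [this, Summable.tsum_add ((hsumm f).of_norm) ((hsumm g).of_norm)]
      map_smul' := by
        intro c f
        dsimp only
        have : (fun k => (w k : ℂ) • (((c • f) k : H))) =
            fun k => c • ((w k : ℂ) • (f k : H)) := by
          funext k
          have : (c • f) k = c • (f k) := by rw [lp.coeFn_smul]; rfl
          rw [this, Submodule.coe_smul, smul_comm]
        rw [this]
        exact Summable.tsum_const_smul c ((hsumm f).of_norm) } with hV₀
  have hV₀_bound : ∀ f, ‖V₀ f‖ ≤ Real.sqrt (∑' k, w k ^ 2) * ‖f‖ := fun f =>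
    (norm_tsum_le_tsum_norm (hsumm f)).trans (hcs f)
  set V : lp (fun k : K => W k) 2 →L[ℂ] H :=
    V₀.mkContinuous (Real.sqrt (∑' k, w k ^ 2)) hV₀_bound with hVdef
  have hVapp : ∀ f, V f = ∑' k, (w k : ℂ) • (f k : H) := fun f => rfl
  have hV : ∀ f : lp (fun k : K => W k) 2,
      HasSum (fun k : K => (w k : ℂ) • (f k : H)) (V f) := fun f =>
    ((hsumm f).of_norm).hasSum
  refine ⟨hsumm, V, hV, V₀.mkContinuous_norm_le (Real.sqrt_nonneg _) hV₀_bound, ?_⟩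
  -- adjoint formula
  have hsingle : ∀ (k : K) (a : W k), V (lp.single 2 k a) = (w k : ℂ) • (a : H) := by
    intro k a
    rw [hVapp, tsum_eq_single k]
    · simp [lp.single_apply]
    · intro j hj
      simp [lp.single_apply, hj]
  have hadj : ∀ (φ : H) (k : K),
      (adjoint V φ k : H) = (w k : ℂ) • ((W k).orthogonalProjectionOnto φ : H) := by
    intro φ k
    have : adjoint V φ k = (w k : ℂ) • (W k).orthogonalProjectionOnto φ := by
      apply ext_inner_left ℂ
      intro a
      have h1 : (inner ℂ a (adjoint V φ k) : ℂ) = inner ℂ (lp.single 2 k a) (adjoint V φ) :=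
        (lp.inner_single_left k a (adjoint V φ)).symm
      rw [h1, ContinuousLinearMap.adjoint_inner_right, hsingle, inner_smul_left,
        inner_smul_right, Submodule.inner_orthogonalProjectionOnto_eq_of_mem_left, Complex.conj_ofReal]
    rw [this, Submodule.coe_smul]
  refine ⟨hadj, ?_, ?_, ?_, ?_, ?_⟩
  -- S is multiplicative on intersections
  · intro J₁ J₂
    refine ContinuousLinearMap.ext fun f => lp.ext (funext fun k => ?_)
    show (S (J₁ ∩ J₂) f) k = (S J₁ (S J₂ f)) k
    rw [hS, hS, hS]
    by_cases h1 : k ∈ J₁ <;> by_cases h2 : k ∈ J₂ <;>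
      simp [h1, h2, Set.mem_inter_iff]
  · refine ContinuousLinearMap.ext fun f => lp.ext (funext fun k => ?_)
    show (S Set.univ f) k = f k
    rw [hS]
    simp
  -- M J = V ∘L S J ∘L adjoint V
  · intro J
    refine ContinuousLinearMap.ext fun g => ext_inner_left ℂ fun f => ?_
    rw [hM J f g]
    have hrhs : (inner ℂ f ((V ∘L S J ∘L adjoint V) g) : ℂ) =
        ∑' k, (inner ℂ f ((w k : ℂ) • ((S J (adjoint V g)) k : H)) : ℂ) := by
      have := (hV (S J (adjoint V g))).mapL (innerSL ℂ f)
      exact this.tsum_eq.symm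
    rw [hrhs]
    rw [tsum_subtype J (fun k => ((w k) ^ 2 : ℂ) *
      inner ℂ f (((W k).orthogonalProjectionOnto g : H)))]
    congr 1
    funext k
    by_cases hk : k ∈ J
    · have : ((S J (adjoint V g)) k : H) = (w k : ℂ) • ((W k).orthogonalProjectionOnto g : H) := by
        rw [hS J (adjoint V g) k, if_pos hk]
        exact hadj g k
      rw [this, Set.indicator_of_mem hk, inner_smul_right, inner_smul_right]
      push_cast
      ring
    · have : ((S J (adjoint V g)) k : H) = 0 := by
        rw [hS J (adjoint V g) k, if_neg hk]
        rfl
      rw [this, Set.indicator_of_notMem hk]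
      simp
  -- positivity bookkeeping
  · have hproj_le : ∀ (φ : H) (k : K), ‖((W k).orthogonalProjectionOnto φ : H)‖ ≤ ‖φ‖ := by
      intro φ k
      rw [← Submodule.coe_norm]
      calc ‖(W k).orthogonalProjectionOnto φ‖ ≤ ‖(W k).orthogonalProjectionOnto‖ * ‖φ‖ :=
            ((W k).orthogonalProjectionOnto).le_opNorm φ
        _ ≤ 1 * ‖φ‖ := by
            exact mul_le_mul_of_nonneg_right (Submodule.orthogonalProjectionOnto_norm_le (W k))
              (norm_nonneg φ)
        _ = ‖φ‖ := one_mul _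
    have hsummφ : ∀ φ : H,
        Summable fun k => w k ^ 2 * ‖((W k).orthogonalProjectionOnto φ : H)‖ ^ 2 := by
      intro φ
      refine Summable.of_nonneg_of_le
        (fun k => mul_nonneg (sq_nonneg _) (sq_nonneg _)) (fun k => ?_)
        (hw₂.mul_right (‖φ‖ ^ 2))
      exact mul_le_mul_of_nonneg_left
        (pow_le_pow_left₀ (norm_nonneg _) (hproj_le φ k) 2) (sq_nonneg _)
    have hVVinner : ∀ φ : H, (inner ℂ φ ((V ∘L adjoint V) φ) : ℂ) =
        ((∑' k, w k ^ 2 * ‖((W k).orthogonalProjectionOnto φ : H)‖ ^ 2 : ℝ) : ℂ) := by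
      intro φ
      have h1 : (inner ℂ φ ((V ∘L adjoint V) φ) : ℂ) =
          inner ℂ (adjoint V φ) (adjoint V φ) := by
        rw [ContinuousLinearMap.comp_apply]
        exact (ContinuousLinearMap.adjoint_inner_left V (adjoint V φ) φ).symm
      rw [h1, lp.inner_eq_tsum]
      have h2 : ∀ k : K, (inner ℂ (adjoint V φ k) (adjoint V φ k) : ℂ) =
          ((w k ^ 2 * ‖((W k).orthogonalProjectionOnto φ : H)‖ ^ 2 : ℝ) : ℂ) := by
        intro k
        rw [inner_self_eq_norm_sq_to_K, Submodule.coe_norm, hadj φ k, hnw]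
        have e : ((w k * ‖((W k).orthogonalProjectionOnto φ : H)‖ : ℝ) : ℂ) ^ 2
            = ((w k ^ 2 * ‖((W k).orthogonalProjectionOnto φ : H)‖ ^ 2 : ℝ) : ℂ) := by
          norm_cast
          ring
        exact e
      rw [tsum_congr h2]
      exact ((hsummφ φ).hasSum.mapL Complex.ofRealCLM).tsum_eq
    have hre : ∀ φ : H, RCLike.re (inner ℂ ((V ∘L adjoint V) φ) φ : ℂ) =
        ∑' k, w k ^ 2 * ‖((W k).orthogonalProjectionOnto φ : H)‖ ^ 2 := by
      intro φ
      rw [← inner_conj_symm, hVVinner φ, Complex.conj_ofReal]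
      exact Complex.ofReal_re _
    have hreA : ∀ (c : ℝ) (φ : H), RCLike.re (inner ℂ (((c : ℂ) • (1 : H →L[ℂ] H)) φ) φ : ℂ) =
        c * ‖φ‖ ^ 2 := by
      intro c φ
      rw [ContinuousLinearMap.smul_apply, ContinuousLinearMap.one_apply, inner_smul_left,
        Complex.conj_ofReal]
      simp [inner_self_eq_norm_sq_to_K]
      exact Or.inl (by norm_cast)
    have hsaVV : IsSelfAdjoint (V ∘L adjoint V) := by
      rw [IsSelfAdjoint, ContinuousLinearMap.star_eq_adjoint,
        ContinuousLinearMap.adjoint_comp, ContinuousLinearMap.adjoint_adjoint]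
    have hsaC : ∀ c : ℝ, IsSelfAdjoint ((c : ℂ) • (1 : H →L[ℂ] H)) := by
      intro c
      rw [IsSelfAdjoint, star_smul, star_one, Complex.star_def, Complex.conj_ofReal]
    refine ⟨⟨(hsaVV.sub (hsaC A)).isSymmetric, fun φ => ?_⟩, ⟨((hsaC B).sub hsaVV).isSymmetric, fun φ => ?_⟩⟩
    · show (0:ℝ) ≤ RCLike.re (inner ℂ ((V ∘L adjoint V - (A : ℂ) • 1) φ) φ : ℂ)
      rw [ContinuousLinearMap.sub_apply, inner_sub_left, map_sub, hre, hreA]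
      linarith [(hframe φ).1]
    · show (0:ℝ) ≤ RCLike.re (inner ℂ (((B : ℂ) • 1 - V ∘L adjoint V) φ) φ : ℂ)
      rw [ContinuousLinearMap.sub_apply, inner_sub_left, map_sub, hre, hreA]
      linarith [(hframe φ).2]
  · intro hABeq
    have hproj_le : ∀ (φ : H) (k : K), ‖((W k).orthogonalProjectionOnto φ : H)‖ ≤ ‖φ‖ := by
      intro φ k
      rw [← Submodule.coe_norm]
      calc ‖(W k).orthogonalProjectionOnto φ‖ ≤ ‖(W k).orthogonalProjectionOnto‖ * ‖φ‖ :=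
            ((W k).orthogonalProjectionOnto).le_opNorm φ
        _ ≤ 1 * ‖φ‖ := by
            exact mul_le_mul_of_nonneg_right (Submodule.orthogonalProjectionOnto_norm_le (W k))
              (norm_nonneg φ)
        _ = ‖φ‖ := one_mul _
    have hsummφ : ∀ φ : H,
        Summable fun k => w k ^ 2 * ‖((W k).orthogonalProjectionOnto φ : H)‖ ^ 2 := by
      intro φ
      refine Summable.of_nonneg_of_le
        (fun k => mul_nonneg (sq_nonneg _) (sq_nonneg _)) (fun k => ?_)
        (hw₂.mul_right (‖φ‖ ^ 2))
      exact mul_le_mul_of_nonneg_left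
        (pow_le_pow_left₀ (norm_nonneg _) (hproj_le φ k) 2) (sq_nonneg _)
    have hVVinner : ∀ φ : H, (inner ℂ φ ((V ∘L adjoint V) φ) : ℂ) =
        ((∑' k, w k ^ 2 * ‖((W k).orthogonalProjectionOnto φ : H)‖ ^ 2 : ℝ) : ℂ) := by
      intro φ
      have h1 : (inner ℂ φ ((V ∘L adjoint V) φ) : ℂ) =
          inner ℂ (adjoint V φ) (adjoint V φ) := by
        rw [ContinuousLinearMap.comp_apply]
        exact (ContinuousLinearMap.adjoint_inner_left V (adjoint V φ) φ).symm
      rw [h1, lp.inner_eq_tsum]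
      have h2 : ∀ k : K, (inner ℂ (adjoint V φ k) (adjoint V φ k) : ℂ) =
          ((w k ^ 2 * ‖((W k).orthogonalProjectionOnto φ : H)‖ ^ 2 : ℝ) : ℂ) := by
        intro k
        rw [inner_self_eq_norm_sq_to_K, Submodule.coe_norm, hadj φ k, hnw]
        have e : ((w k * ‖((W k).orthogonalProjectionOnto φ : H)‖ : ℝ) : ℂ) ^ 2
            = ((w k ^ 2 * ‖((W k).orthogonalProjectionOnto φ : H)‖ ^ 2 : ℝ) : ℂ) := by
          norm_cast
          ring
        exact e
      rw [tsum_congr h2]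
      exact ((hsummφ φ).hasSum.mapL Complex.ofRealCLM).tsum_eq
    have htight : ∀ φ : H,
        (∑' k, w k ^ 2 * ‖((W k).orthogonalProjectionOnto φ : H)‖ ^ 2) = A * ‖φ‖ ^ 2 := by
      intro φ
      refine le_antisymm ?_ (hframe φ).1
      have := (hframe φ).2
      rw [← hABeq] at this
      exact this
    have h0 : ((V ∘L adjoint V - (A : ℂ) • 1 : H →L[ℂ] H) : H →ₗ[ℂ] H) = 0 := by
      rw [← inner_map_self_eq_zero]
      intro x
      show (inner ℂ ((V ∘L adjoint V - (A : ℂ) • 1) x) x : ℂ) = 0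
      rw [ContinuousLinearMap.sub_apply, inner_sub_left, ← inner_conj_symm ((V ∘L adjoint V) x) x,
        hVVinner x, htight x, Complex.conj_ofReal, ContinuousLinearMap.smul_apply,
        ContinuousLinearMap.one_apply, inner_smul_left, Complex.conj_ofReal,
        inner_self_eq_norm_sq_to_K]
      have e : ((A * ‖x‖ ^ 2 : ℝ) : ℂ) - (A : ℂ) * ((‖x‖ : ℝ) : ℂ) ^ 2 = 0 := by
        push_cast
        ring
      exact e
    have : V ∘L adjoint V - (A : ℂ) • 1 = 0 :=
      ContinuousLinearMap.coe_injective (by rw [h0]; rfl)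
    exact sub_eq_zero.mp this
end
end

section
/- Let M be a framed POVM on Ω with values in the positive bounded operators on a complex Hilbert space H with frame bounds 0 < A ≤ B < ∞, let (S, H♯, V) be a Naimark representation of M with S(Ω) = 1, and suppose H♯ decomposes as an orthogonal direct sum H♯ = ⊕_{n ∈ ℕ} G_n of closed subspaces each invariant under S, i.e., S(ω) G_n ⊆ G_n for all Borel ω and all n. Let P_n denote the orthogonal projection of H♯ onto G_n and set V_n = V P_n. Then: (1) M(ω) = Σ_n V_n S(ω) V_n* for every Borel ω (convergence in the weak operator topology); (2) V_n* V_n V_m* V_m = 0 whenever n ≠ m; and (3) A·1_H ≤ Σ_n V_n V_n* ≤ B·1_H. -/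
noncomputable section

open MeasureTheory ContinuousLinearMap

/-- **Decomposition of a framed POVM along an invariant orthogonal decomposition.** Let `M`
be a framed POVM with bounds `0 < A ≤ B`, let `(S, H♯, V)` be a Naimark representation of
`M`, and suppose `H♯ = ⊕_n G n` is an orthogonal decomposition into closed subspaces, each
invariant under `S`, with orthogonal projections `P n` onto `G n`; set `V_n = V ∘ P n`.
Then `M(ω) = ∑_n V_n S(ω) V_n*` in the weak operator topology, `V_n* V_n V_m* V_m = 0` for
`n ≠ m`, and `A·1 ≤ ∑_n V_n V_n* ≤ B·1` (expressed via the quadratic forms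
`∑_n ‖V_n* f‖²`). -/
theorem framed_povm_multiplicity_decomposition
    {Ω : Type*} [TopologicalSpace Ω] [MeasurableSpace Ω] [BorelSpace Ω]
    {H : Type*} [NormedAddCommGroup H] [InnerProductSpace ℂ H] [CompleteSpace H]
    {H' : Type*} [NormedAddCommGroup H'] [InnerProductSpace ℂ H'] [CompleteSpace H']
    (M : Set Ω → H →L[ℂ] H) (A B : ℝ) (hM : IsFramedPOVM M A B)
    (S : Set Ω → H' →L[ℂ] H') (V : H' →L[ℂ] H) (hrep : IsNaimarkRep M S V)
    (G : ℕ → Submodule ℂ H')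
    (hclosed : ∀ n : ℕ, IsClosed (G n : Set H'))
    (horth : ∀ m n : ℕ, m ≠ n → ∀ x ∈ G m, ∀ y ∈ G n, (inner ℂ x y : ℂ) = 0)
    (hspan : (⨆ n : ℕ, G n).topologicalClosure = ⊤)
    (hinv : ∀ ω : Set Ω, MeasurableSet ω → ∀ n : ℕ, ∀ x ∈ G n, S ω x ∈ G n)
    (P : ℕ → H' →L[ℂ] H')
    (hP : ∀ n : ℕ, IsSelfAdjoint (P n) ∧ IsIdempotentElem (P n) ∧
      LinearMap.range (P n : H' →ₗ[ℂ] H') = G n) :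
    (∀ ω : Set Ω, MeasurableSet ω → ∀ f g : H,
      HasSum (fun n : ℕ => (inner ℂ f ((V ∘L P n) (S ω (adjoint (V ∘L P n) g))) : ℂ))
        (inner ℂ f (M ω g))) ∧
    (∀ m n : ℕ, m ≠ n →
      adjoint (V ∘L P m) ∘L (V ∘L P m) ∘L (adjoint (V ∘L P n) ∘L (V ∘L P n)) = 0) ∧
    (∀ f : H,
      A * ‖f‖ ^ 2 ≤ ∑' n : ℕ, ‖adjoint (V ∘L P n) f‖ ^ 2 ∧
      (∑' n : ℕ, ‖adjoint (V ∘L P n) f‖ ^ 2) ≤ B * ‖f‖ ^ 2) := by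
  obtain ⟨hSpec, hSuniv, hMrep⟩ := hrep
  -- basic facts about the projections P n
  have hPsa : ∀ n, adjoint (P n) = P n := fun n => (hP n).1
  have hPmem : ∀ n x, P n x ∈ G n := by
    intro n x
    rw [← (hP n).2.2]
    exact LinearMap.mem_range_self _ x
  have hPfix : ∀ n, ∀ x ∈ G n, P n x = x := by
    intro n x hx
    rw [← (hP n).2.2] at hx
    obtain ⟨y, rfl⟩ := hx
    have : (P n * P n) y = P n y := by rw [(hP n).2.1]
    simpa [ContinuousLinearMap.mul_apply] using this
  have hPzero : ∀ m n, m ≠ n → ∀ x ∈ G n, P m x = 0 := by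
    intro m n hmn x hx
    have h1 : (inner ℂ (P m x) (P m x) : ℂ) = inner ℂ x (P m (P m x)) := by
      calc (inner ℂ (P m x) (P m x) : ℂ)
          = inner ℂ ((adjoint (P m)) x) (P m x) := by rw [hPsa m]
        _ = inner ℂ x (P m (P m x)) := adjoint_inner_left _ _ _
    have h2 : P m (P m x) = P m x := hPfix m _ (hPmem m x)
    have h3 : (inner ℂ x (P m x) : ℂ) = 0 :=
      horth n m (Ne.symm hmn) x hx (P m x) (hPmem m x)
    have : (inner ℂ (P m x) (P m x) : ℂ) = 0 := by rw [h1, h2, h3]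
    exact inner_self_eq_zero.mp this
  -- Hilbert sum structure
  haveI : ∀ n, CompleteSpace (G n) := fun n => (hclosed n).completeSpace_coe
  have hOF : OrthogonalFamily ℂ (fun n => G n) (fun n => (G n).subtypeₗᵢ) := by
    intro m n hmn x y
    exact horth m n hmn x x.2 y y.2
  have hHS : IsHilbertSum ℂ (fun n => G n) (fun n => (G n).subtypeₗᵢ) :=
    IsHilbertSum.mkInternal _ hOF (le_of_eq hspan.symm)
  set e := hHS.linearIsometryEquiv with he
  have hsum : ∀ x : H', HasSum (fun n => ((e x) n : H')) x := by
    intro x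
    have := hHS.hasSum_linearIsometryEquiv_symm (e x)
    rw [← he, LinearIsometryEquiv.symm_apply_apply] at this
    exact this
  have hPx : ∀ n (x : H'), P n x = ((e x) n : H') := by
    intro n x
    have h1 : HasSum (fun m => P n (((e x) m : H'))) (P n x) := (hsum x).mapL (P n)
    have h2 : HasSum (fun m => P n (((e x) m : H'))) (P n ((e x) n : H')) :=
      hasSum_single n (fun m hm => hPzero n m (Ne.symm hm) _ ((e x) m).2)
    rw [hPfix n _ ((e x) n).2] at h2
    exact h1.unique h2
  have hPsum : ∀ x : H', HasSum (fun n => P n x) x := by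
    intro x
    have := hsum x
    rw [show (fun n => (((e x) n : H'))) = fun n => P n x from
      funext fun n => (hPx n x).symm] at this
    exact this
  -- Parseval
  have hParseval : ∀ x : H', HasSum (fun n => ‖P n x‖ ^ 2) (‖x‖ ^ 2) := by
    intro x
    have h1 : HasSum (fun n => (innerSL ℂ x) (P n x)) ((innerSL ℂ x) x) :=
      (hPsum x).mapL (innerSL ℂ x)
    have h2 : ∀ n, (innerSL ℂ x) (P n x) = ((‖P n x‖ ^ 2 : ℝ) : ℂ) := by
      intro n
      have ha : (inner ℂ x (P n x) : ℂ) = inner ℂ (P n x) (P n x) := by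
        calc (inner ℂ x (P n x) : ℂ)
            = inner ℂ x ((adjoint (P n)) (P n x)) := by
              rw [hPsa n, hPfix n (P n x) (hPmem n x)]
          _ = inner ℂ (P n x) (P n x) := adjoint_inner_right _ _ _
      have : (innerSL ℂ x) (P n x) = inner ℂ x (P n x) := rfl
      rw [this, ha, inner_self_eq_norm_sq_to_K]
      norm_cast
    rw [show (fun n => (innerSL ℂ x) (P n x)) = fun n => ((‖P n x‖ ^ 2 : ℝ) : ℂ) from
      funext h2] at h1
    have h3 : (innerSL ℂ x) x = ((‖x‖ ^ 2 : ℝ) : ℂ) := by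
      have : (innerSL ℂ x) x = inner ℂ x x := rfl
      rw [this, inner_self_eq_norm_sq_to_K]; norm_cast
    rw [h3] at h1
    have h4 := h1.mapL Complex.reCLM
    have h5 : ∀ n, Complex.reCLM ((‖P n x‖ ^ 2 : ℝ) : ℂ) = ‖P n x‖ ^ 2 := fun n => by
      simp only [Complex.reCLM_apply, Complex.ofReal_re]
    have h6 : Complex.reCLM ((‖x‖ ^ 2 : ℝ) : ℂ) = ‖x‖ ^ 2 := by
      simp only [Complex.reCLM_apply, Complex.ofReal_re]
    rw [show (fun n => Complex.reCLM ((‖P n x‖ ^ 2 : ℝ) : ℂ)) = fun n => ‖P n x‖ ^ 2 from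
      funext h5, h6] at h4
    exact h4
  have hadj : ∀ n : ℕ, adjoint (V ∘L P n) = P n ∘L adjoint V := by
    intro n; rw [adjoint_comp, hPsa]
  refine ⟨?_, ?_, ?_⟩
  · -- part 1
    intro ω hω f g
    set y := adjoint V g with hy
    have hterm : ∀ n, (V ∘L P n) (S ω (adjoint (V ∘L P n) g)) = V (S ω (P n y)) := by
      intro n
      rw [hadj n]
      show V (P n (S ω (P n y))) = V (S ω (P n y))
      congr 1
      exact hPfix n _ (hinv ω hω n _ (hPmem n y))
    have h1 : HasSum (fun n => (innerSL ℂ f) (V (S ω (P n y))))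
        ((innerSL ℂ f) (V (S ω y))) :=
      (((hPsum y).mapL (S ω)).mapL V).mapL (innerSL ℂ f)
    have h2 : (inner ℂ f (M ω g) : ℂ) = (innerSL ℂ f) (V (S ω y)) := by
      rw [hMrep ω hω]; rfl
    rw [show (fun n : ℕ => (inner ℂ f ((V ∘L P n) (S ω (adjoint (V ∘L P n) g))) : ℂ)) =
      fun n => (innerSL ℂ f) (V (S ω (P n y))) from funext fun n => by
        rw [hterm n]; rfl, h2]
    exact h1
  · -- part 2
    intro m n hmn
    ext x
    have hz : P m ((P n ∘L adjoint V) ((V ∘L P n) x)) = 0 :=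
      hPzero m n hmn _ (hPmem n _)
    simp only [ContinuousLinearMap.comp_apply, hadj, ContinuousLinearMap.zero_apply]
    rw [show (P n ((adjoint V) (V (P n x)))) = (P n ∘L adjoint V) ((V ∘L P n) x) from rfl,
      hz]
    simp
  · -- part 3
    intro f
    set y := adjoint V f with hy
    have hnorm : ∀ n, ‖adjoint (V ∘L P n) f‖ = ‖P n y‖ := by
      intro n; rw [hadj n]; rfl
    have hsum2 : HasSum (fun n => ‖adjoint (V ∘L P n) f‖ ^ 2) (‖y‖ ^ 2) := by
      rw [show (fun n => ‖adjoint (V ∘L P n) f‖ ^ 2) = fun n => ‖P n y‖ ^ 2 from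
        funext fun n => by rw [hnorm n]]
      exact hParseval y
    have htsum : ∑' n, ‖adjoint (V ∘L P n) f‖ ^ 2 = ‖y‖ ^ 2 := hsum2.tsum_eq
    have hMuniv : M Set.univ = V ∘L adjoint V := by
      rw [hMrep Set.univ MeasurableSet.univ, hSuniv]
      ext z; simp
    have hkey : Complex.re (inner ℂ ((M Set.univ) f) f : ℂ) = ‖y‖ ^ 2 := by
      have h1 : (inner ℂ ((M Set.univ) f) f : ℂ) =
          (starRingEnd ℂ) (inner ℂ f ((M Set.univ) f)) := (inner_conj_symm _ _).symm
      have h2 : (inner ℂ f ((M Set.univ) f) : ℂ) = inner ℂ y y := by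
        rw [hMuniv]
        show (inner ℂ f (V (adjoint V f)) : ℂ) = inner ℂ y y
        rw [← adjoint_inner_left V ((adjoint V) f) f]
      rw [h1, h2, inner_self_eq_norm_sq_to_K]
      norm_cast
    have hinner_self : (inner ℂ f f : ℂ) = ((‖f‖ ^ 2 : ℝ) : ℂ) := by
      rw [inner_self_eq_norm_sq_to_K]; norm_cast
    have hApos := hM.2.2.2.1.2 f
    have hBpos := hM.2.2.2.2.2 f
    rw [ContinuousLinearMap.reApplyInnerSelf_apply] at hApos hBpos
    simp only [RCLike.re_to_complex] at hApos hBpos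
    have hexpA : Complex.re (inner ℂ ((M Set.univ - (A : ℂ) • 1) f) f : ℂ) =
        Complex.re (inner ℂ ((M Set.univ) f) f : ℂ) - A * ‖f‖ ^ 2 := by
      rw [ContinuousLinearMap.sub_apply, inner_sub_left, Complex.sub_re,
        ContinuousLinearMap.smul_apply, ContinuousLinearMap.one_apply, inner_smul_left,
        hinner_self, Complex.conj_ofReal, ← Complex.ofReal_mul, Complex.ofReal_re]
    have hexpB : Complex.re (inner ℂ (((B : ℂ) • 1 - M Set.univ) f) f : ℂ) =
        B * ‖f‖ ^ 2 - Complex.re (inner ℂ ((M Set.univ) f) f : ℂ) := by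
      rw [ContinuousLinearMap.sub_apply, inner_sub_left, Complex.sub_re,
        ContinuousLinearMap.smul_apply, ContinuousLinearMap.one_apply, inner_smul_left,
        hinner_self, Complex.conj_ofReal, ← Complex.ofReal_mul, Complex.ofReal_re]
    rw [hexpA] at hApos
    rw [hexpB] at hBpos
    rw [htsum, ← hkey]
    constructor <;> linarith
end
end
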